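/- arXiv:1804.09448 — 8 statements merged into one kernel-verified Lean document; each statement's English description precedes it below -/
import Mathlib

section
/- Let F be a field, k ≥ 1, and a_1, …, a_k ∈ F. For each j let φ_j = (1, a_j, a_j², …, a_j^{k−1}) ∈ F^k be the Vandermonde vector of a_j. Then ι(φ_1)·ι(φ_2)⋯ι(φ_k) = (∏_{1 ≤ s < t ≤ k} (a_t − a_s)) • (ι(e_1)·ι(e_2)⋯ι(e_k)) in Λ(F^k). In particular, if a_1, …, a_k are pairwise distinct, then ι(φ_1)·ι(φ_2)⋯ι(φ_k) ≠ 0. -/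
open ExteriorAlgebra Matrix

/-- Module-valued version of `AlternatingMap.eq_smul_basis_det` for the standard basis. -/
lemma alt_eq_det_smul {F : Type} [Field F] {N : Type} [AddCommGroup N] [Module F N] {k : ℕ}
    (f : (Fin k → F) [⋀^Fin k]→ₗ[F] N) (v : Fin k → (Fin k → F)) :
    f v = (Pi.basisFun F (Fin k)).det v • f (Pi.basisFun F (Fin k)) := by
  set e := Pi.basisFun F (Fin k)
  rw [← sub_eq_zero, ← Module.forall_dual_apply_eq_zero_iff F]
  intro ℓ
  have h := AlternatingMap.eq_smul_basis_det e (ℓ.compAlternatingMap f)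
  have h2 := DFunLike.congr_fun h v
  simp only [LinearMap.compAlternatingMap_apply, AlternatingMap.smul_apply,
    smul_eq_mul] at h2
  simp [h2, mul_comm]

lemma basis_wedge_ne_zero {F : Type} [Field F] (k : ℕ) :
    ιMulti F k (Pi.basisFun F (Fin k)) ≠ (0 : ExteriorAlgebra F (Fin k → F)) := by
  intro h0
  have h : (ExteriorAlgebra.liftAlternating
      (fun i => if h : i = k then
        ((Pi.basisFun F (Fin k)).det).domDomCongr (finCongr h.symm) else 0))
      (ιMulti F k (Pi.basisFun F (Fin k))) = 1 := by
    rw [ExteriorAlgebra.liftAlternating_apply_ιMulti, dif_pos rfl]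
    exact Module.Basis.det_self _
  rw [h0, map_zero] at h
  exact one_ne_zero (α := F) h.symm

/-- The wedge product of `k` Vandermonde vectors equals the Vandermonde determinant
`∏_{s<t} (a t - a s)` times the wedge of the standard basis; in particular it is
nonzero when the `a j` are pairwise distinct. -/
theorem vandermonde_extensor_prod
    {F : Type} [Field F] (k : ℕ) (hk : 1 ≤ k) (a : Fin k → F) :
    (List.ofFn (fun j : Fin k =>
        ExteriorAlgebra.ι F (fun i : Fin k => a j ^ (i : ℕ)))).prod =
      (∏ t : Fin k, ∏ s ∈ Finset.Iio t, (a t - a s)) •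
        (List.ofFn (fun i : Fin k =>
          ExteriorAlgebra.ι F (Pi.single i (1 : F) : Fin k → F))).prod ∧
    (Function.Injective a →
      (List.ofFn (fun j : Fin k =>
        ExteriorAlgebra.ι F (fun i : Fin k => a j ^ (i : ℕ)))).prod ≠ 0) := by
  have hbasis : (fun i : Fin k => (Pi.single i (1:F) : Fin k → F)) = ⇑(Pi.basisFun F (Fin k)) := by
    funext i
    simp [Pi.basisFun_apply]
  have hL1 : (List.ofFn (fun j : Fin k =>
      ExteriorAlgebra.ι F (fun i : Fin k => a j ^ (i : ℕ)))).prod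
      = ιMulti F k (fun (j : Fin k) (i : Fin k) => a j ^ (i : ℕ)) := (ιMulti_apply _).symm
  have hL2 : (List.ofFn (fun i : Fin k =>
      ExteriorAlgebra.ι F (Pi.single i (1 : F) : Fin k → F))).prod
      = ιMulti F k (Pi.basisFun F (Fin k)) := by
    rw [← hbasis]; exact (ιMulti_apply _).symm
  have hdet : (Pi.basisFun F (Fin k)).det (fun (j : Fin k) (i : Fin k) => a j ^ (i : ℕ))
      = ∏ t : Fin k, ∏ s ∈ Finset.Iio t, (a t - a s) := by
    rw [Module.Basis.det_apply]
    have : (Pi.basisFun F (Fin k)).toMatrix (fun (j : Fin k) (i : Fin k) => a j ^ (i : ℕ))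
        = (Matrix.vandermonde a)ᵀ := by
      ext i j
      simp [Module.Basis.toMatrix_apply, Matrix.vandermonde, Matrix.transpose_apply]
    rw [this, Matrix.det_transpose, Matrix.det_vandermonde]
    refine Finset.prod_comm' ?_
    intro x y
    simp only [Finset.mem_univ, true_and, Finset.mem_Ioi, Finset.mem_Iio, and_true]
  have hmain : (List.ofFn (fun j : Fin k =>
      ExteriorAlgebra.ι F (fun i : Fin k => a j ^ (i : ℕ)))).prod
      = (∏ t : Fin k, ∏ s ∈ Finset.Iio t, (a t - a s)) •
        (List.ofFn (fun i : Fin k =>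
          ExteriorAlgebra.ι F (Pi.single i (1 : F) : Fin k → F))).prod := by
    rw [hL1, hL2, alt_eq_det_smul (ιMulti F k) (fun (j : Fin k) (i : Fin k) => a j ^ (i : ℕ)), hdet]
  refine ⟨hmain, fun hinj => ?_⟩
  rw [hmain]
  refine smul_ne_zero ?_ (by rw [hL2]; exact basis_wedge_ne_zero k)
  refine Finset.prod_ne_zero_iff.mpr fun t _ => Finset.prod_ne_zero_iff.mpr fun s hs => ?_
  rw [Finset.mem_Iio] at hs
  exact sub_ne_zero_of_ne fun h => (ne_of_lt hs) (hinj h).symm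
end

section
/- Let F be a field, m ∈ ℕ, V a finite type, E : V → V → Prop a directed graph, k ≥ 1, and let ξ : V → Λ(F^m) be a map such that for every v ∈ V, ξ(v) is a product of a nonempty finite list of vectors ι(v_1)⋯ι(v_s) with s ≥ 1. Then the walk-sum equals the path-sum: Σ over all k-walks w of the ordered product ξ(w 0)·ξ(w 1)⋯ξ(w (k−1)) is equal to Σ over all k-paths w of ξ(w 0)·ξ(w 1)⋯ξ(w (k−1)). -/
/-- A wedge product of a list of vectors with a duplicate is zero. -/
lemma prod_map_ι_eq_zero_of_not_nodup {F : Type} [Field F] (m : ℕ)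
    (l : List (Fin m → F)) (h : ¬ l.Nodup) :
    (l.map (ExteriorAlgebra.ι F)).prod = 0 := by
  rw [List.nodup_iff_injective_get] at h
  rw [Function.Injective] at h
  push_neg at h
  obtain ⟨i, j, hij, hne⟩ := h
  have hl : l.map (ExteriorAlgebra.ι F)
      = List.ofFn (fun i => ExteriorAlgebra.ι F (l.get i)) := by
    conv_lhs => rw [← List.ofFn_get l, List.map_ofFn]
    rfl
  rw [hl, ← ExteriorAlgebra.ιMulti_apply]
  exact AlternatingMap.map_eq_zero_of_eq _ _ hij hne

/-- If every vertex is assigned a decomposable extensor, the walk-sum over `k`-walks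
equals the sum over `k`-paths (walks that are injective), since non-paths vanish. -/
theorem walk_sum_eq_path_sum
    {F : Type} [Field F] (m : ℕ) (V : Type) [Fintype V] [DecidableEq V]
    (E : V → V → Prop) [DecidableRel E] (k : ℕ) (hk : 1 ≤ k)
    (ξ : V → ExteriorAlgebra F (Fin m → F))
    (hξ : ∀ v : V, ∃ l : List (Fin m → F), l ≠ [] ∧
      ξ v = (l.map (ExteriorAlgebra.ι F)).prod) :
    ∑ w ∈ Finset.univ.filter
        (fun w : Fin k → V =>
          ∀ i j : Fin k, (j : ℕ) = (i : ℕ) + 1 → E (w i) (w j)),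
      (List.ofFn (fun i => ξ (w i))).prod
    = ∑ w ∈ Finset.univ.filter
        (fun w : Fin k → V =>
          (∀ i j : Fin k, (j : ℕ) = (i : ℕ) + 1 → E (w i) (w j)) ∧
            Function.Injective w),
      (List.ofFn (fun i => ξ (w i))).prod := by
  classical
  choose L hL hLξ using hξ
  symm
  apply Finset.sum_subset
  · intro w hw
    simp only [Finset.mem_filter] at hw ⊢
    exact ⟨hw.1, hw.2.1⟩
  · intro w hw hw'
    simp only [Finset.mem_filter, Finset.mem_univ, true_and] at hw hw'
    have hninj : ¬ Function.Injective w := fun h => hw' ⟨hw, h⟩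
    rw [Function.Injective] at hninj
    push_neg at hninj
    obtain ⟨i, j, hij, hne⟩ := hninj
    -- rewrite the product as a wedge of a single list of vectors
    have h1 : (List.ofFn fun i => ξ (w i))
        = (List.ofFn fun i => ((L (w i)).map (ExteriorAlgebra.ι F))).map List.prod := by
      simp only [hLξ, List.map_ofFn]
      rfl
    set J : List (Fin m → F) := (List.ofFn fun i => L (w i)).flatten with hJ
    have h2 : (List.ofFn fun i => ((L (w i)).map (ExteriorAlgebra.ι F)))
        = (List.ofFn fun i => L (w i)).map (List.map (ExteriorAlgebra.ι F)) := by
      rw [List.map_ofFn]; rfl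
    have h3 : (List.ofFn fun i => ξ (w i)).prod = (J.map (ExteriorAlgebra.ι F)).prod := by
      rw [h1, ← List.prod_flatten, h2, ← List.map_flatten]
    rw [h3]
    apply prod_map_ι_eq_zero_of_not_nodup
    -- J has a duplicate: the head of L (w i) appears in both segment i and segment j
    intro hnd
    obtain ⟨x, hx⟩ := List.exists_mem_of_ne_nil _ (hL (w i))
    have hxj : x ∈ L (w j) := hij ▸ hx
    have hcount : 2 ≤ List.count x J := by
      rw [hJ, List.count_flatten, List.map_ofFn, List.sum_ofFn]
      calc 2 ≤ List.count x (L (w i)) + List.count x (L (w j)) := by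
              have h1 : 0 < List.count x (L (w i)) := List.count_pos_iff.mpr hx
              have h2 : 0 < List.count x (L (w j)) := List.count_pos_iff.mpr hxj
              omega
        _ = ∑ a ∈ ({i, j} : Finset (Fin k)), List.count x (L (w a)) := by
              rw [Finset.sum_pair hne]
        _ ≤ ∑ a : Fin k, List.count x (L (w a)) :=
              Finset.sum_le_sum_of_subset (Finset.subset_univ _)
        _ = ∑ a : Fin k, (fun a => List.count x (L (w a))) a := rfl
    have := List.nodup_iff_count_le_one.mp hnd x
    omega
end

section
/- Let F be a field, k ∈ ℕ, x_1, …, x_k ∈ F^k, and let X : Matrix (Fin k) (Fin k) F be the matrix whose j-th column is x_j. In the exterior algebra Λ(F^k × F^k) of the 2k-dimensional space F^k × F^k, define the lifted blade x̄_j = ι(x_j, 0)·ι(0, x_j). Then x̄_1 · x̄_2 ⋯ x̄_k = (−1)^{k(k−1)/2} (det X)² • ( ι(e_1,0)⋯ι(e_k,0) · ι(0,e_1)⋯ι(0,e_k) ). -/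
open ExteriorAlgebra

/-- A module-valued alternating map on a space with a basis is determinant times value
on the basis. -/
lemma alt_map_eq_det_smul {R M N : Type*} [CommRing R] [AddCommGroup M] [Module R M]
    [AddCommGroup N] [Module R N] {ι : Type*} [Fintype ι] [DecidableEq ι]
    (e : Module.Basis ι R M) (f : M [⋀^ι]→ₗ[R] N) (v : ι → M) :
    f v = e.det v • f e := by
  have h : f = e.det.smulRight (f e) := by
    apply Module.Basis.ext_alternating e
    intro w hw
    have hb : Function.Bijective w := (Finite.injective_iff_bijective).mp hw
    set σ : Equiv.Perm ι := Equiv.ofBijective w hb with hσ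
    have hwe : (fun i => e (w i)) = e ∘ σ := rfl
    rw [hwe, AlternatingMap.map_perm, AlternatingMap.smulRight_apply,
      AlternatingMap.map_perm, Module.Basis.det_self]
    simp
  conv_lhs => rw [h]
  rw [AlternatingMap.smulRight_apply]

section aux
variable {A : Type*} [Ring A]

lemma aux_pass (b : A) (l : List A) (h : ∀ a ∈ l, b * a = -(a * b)) :
    b * l.prod = (-1 : A) ^ l.length * l.prod * b := by
  induction l with
  | nil => simp
  | cons a l ih =>
    have h1 : b * a = -(a * b) := h a List.mem_cons_self
    have ih' := ih (fun a ha => h a (List.mem_cons_of_mem _ ha))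
    have hc : (-1 : A) ^ l.length * a = a * (-1 : A) ^ l.length :=
      ((Commute.neg_one_left a).pow_left l.length).eq
    simp only [List.prod_cons, List.length_cons, pow_succ]
    calc b * (a * l.prod) = (b * a) * l.prod := (mul_assoc _ _ _).symm
      _ = -(a * (b * l.prod)) := by rw [h1, neg_mul, mul_assoc]
      _ = -(a * ((-1 : A) ^ l.length * (l.prod * b))) := by rw [ih', mul_assoc]
      _ = -(((-1 : A) ^ l.length * a) * (l.prod * b)) := by rw [hc, mul_assoc]
      _ = (-1 : A) ^ l.length * -1 * (a * l.prod) * b := by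
          simp only [neg_mul, mul_neg_one, mul_neg, neg_neg, mul_assoc, one_mul]

lemma aux_reorder (l : List (A × A))
    (h : ∀ p ∈ l, ∀ q ∈ l, p.2 * q.1 = -(q.1 * p.2)) :
    (l.map fun p => p.1 * p.2).prod =
      (-1 : A) ^ (l.length.choose 2) * (l.map Prod.fst).prod * (l.map Prod.snd).prod := by
  induction l with
  | nil => simp
  | cons p l ih =>
    have ih' := ih (fun a ha b hb => h a (List.mem_cons_of_mem _ ha) b (List.mem_cons_of_mem _ hb))
    have hpass := aux_pass p.2 (l.map Prod.fst) (by
      intro a ha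
      rcases List.mem_map.mp ha with ⟨q, hq, rfl⟩
      exact h p List.mem_cons_self q (List.mem_cons_of_mem _ hq))
    rw [List.length_map] at hpass
    have hch : (l.length + 1).choose 2 = l.length + l.length.choose 2 := by
      rw [Nat.choose_succ_succ]
      simp [Nat.choose_one_right, Nat.add_comm]
    set A1 := (l.map Prod.fst).prod
    set B1 := (l.map Prod.snd).prod
    have hc1 : ∀ z : A, (-1 : A) ^ l.length.choose 2 * z = z * (-1 : A) ^ l.length.choose 2 :=
      fun z => ((Commute.neg_one_left z).pow_left _).eq
    simp only [List.map_cons, List.prod_cons, List.length_cons]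
    rw [ih', hch, pow_add]
    calc p.1 * p.2 * ((-1:A) ^ l.length.choose 2 * A1 * B1)
        = p.1 * ((p.2 * (-1:A) ^ l.length.choose 2) * (A1 * B1)) := by
          simp only [mul_assoc]
      _ = p.1 * ((-1:A) ^ l.length.choose 2 * (p.2 * A1 * B1)) := by
          rw [← hc1 p.2]; simp only [mul_assoc]
      _ = p.1 * ((-1:A) ^ l.length.choose 2 * ((-1:A) ^ l.length * A1 * p.2 * B1)) := by
          rw [hpass]
      _ = (p.1 * (-1:A) ^ l.length.choose 2) * ((-1:A) ^ l.length * (A1 * (p.2 * B1))) := by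
          simp only [mul_assoc]
      _ = (-1:A) ^ l.length.choose 2 * ((p.1 * (-1:A) ^ l.length) * (A1 * (p.2 * B1))) := by
          rw [← hc1 p.1]; simp only [mul_assoc]
      _ = (-1:A) ^ l.length.choose 2 * ((-1:A) ^ l.length * (p.1 * (A1 * (p.2 * B1)))) := by
          rw [← ((Commute.neg_one_left p.1).pow_left l.length).eq]; simp only [mul_assoc]
      _ = (-1:A) ^ l.length * (-1:A) ^ l.length.choose 2 * (p.1 * A1) * (p.2 * B1) := by
          rw [← hc1 ((-1:A) ^ l.length)]; simp only [mul_assoc]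

end aux

/-- The product of the lifted blades `x̄ⱼ = ι(xⱼ,0)·ι(0,xⱼ)` in `Λ(F^k × F^k)` equals
`(-1)^{k(k-1)/2} (det X)²` times the product of the lifted standard basis blades. -/
theorem lifted_blade_prod_eq_det_sq_smul
    {F : Type} [Field F] (k : ℕ) (x : Fin k → (Fin k → F))
    (X : Matrix (Fin k) (Fin k) F) (hX : ∀ i j, X i j = x j i) :
    (List.ofFn (fun j : Fin k =>
        ExteriorAlgebra.ι F ((x j, 0) : (Fin k → F) × (Fin k → F)) *
          ExteriorAlgebra.ι F ((0, x j) : (Fin k → F) × (Fin k → F)))).prod =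
      ((-1 : F) ^ (k * (k - 1) / 2) * X.det ^ 2) •
        ((List.ofFn (fun i : Fin k =>
            ExteriorAlgebra.ι F ((Pi.single i (1 : F), 0) :
              (Fin k → F) × (Fin k → F)))).prod *
          (List.ofFn (fun i : Fin k =>
            ExteriorAlgebra.ι F ((0, Pi.single i (1 : F)) :
              (Fin k → F) × (Fin k → F)))).prod) := by
  classical
  set W := ((Fin k → F) × (Fin k → F)) with hW
  set e : Module.Basis (Fin k) F (Fin k → F) := Pi.basisFun F (Fin k) with he
  have anti : ∀ v w : W, ExteriorAlgebra.ι F v * ExteriorAlgebra.ι F w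
      = -(ExteriorAlgebra.ι F w * ExteriorAlgebra.ι F v) := by
    intro v w
    have h0 := ExteriorAlgebra.ι_add_mul_swap (R := F) v w
    rw [eq_neg_iff_add_eq_zero]
    exact h0
  -- reorder
  have hre := aux_reorder (A := ExteriorAlgebra F W)
    (List.ofFn (fun j : Fin k =>
      ((ExteriorAlgebra.ι F ((x j, 0) : W)), ExteriorAlgebra.ι F ((0, x j) : W))))
    (by
      intro p hp q hq
      obtain ⟨i, rfl⟩ := List.mem_ofFn.mp hp
      obtain ⟨j, rfl⟩ := List.mem_ofFn.mp hq
      exact anti _ _)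
  simp only [List.map_ofFn, List.length_ofFn, Function.comp_def] at hre
  -- determinant
  have hdet : e.det x = X.det := by
    rw [Module.Basis.det_apply]
    congr 1
    ext i j
    rw [Module.Basis.toMatrix_apply, hX]
    simp [he]
  have key : ∀ (g : (Fin k → F) →ₗ[F] W),
      (List.ofFn fun i => ExteriorAlgebra.ι F (g (x i))).prod
        = X.det • (List.ofFn fun i => ExteriorAlgebra.ι F (g (Pi.single i (1 : F)))).prod := by
    intro g
    have h := alt_map_eq_det_smul e
      ((ExteriorAlgebra.ιMulti F k (M := W)).compLinearMap g) x
    simp only [AlternatingMap.compLinearMap_apply, ExteriorAlgebra.ιMulti_apply, hdet] at h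
    convert h using 4
    funext i
    rw [he, Pi.basisFun_apply]
  have hA : (List.ofFn fun i : Fin k => ExteriorAlgebra.ι F ((x i, 0) : W)).prod
      = X.det • (List.ofFn fun i : Fin k =>
          ExteriorAlgebra.ι F ((Pi.single i (1 : F), 0) : W)).prod := by
    exact key (LinearMap.inl F (Fin k → F) (Fin k → F))
  have hB : (List.ofFn fun i : Fin k => ExteriorAlgebra.ι F ((0, x i) : W)).prod
      = X.det • (List.ofFn fun i : Fin k =>
          ExteriorAlgebra.ι F ((0, Pi.single i (1 : F)) : W)).prod := by
    exact key (LinearMap.inr F (Fin k → F) (Fin k → F))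
  rw [hre, hA, hB]
  have hneg : (-1 : ExteriorAlgebra F W) ^ k.choose 2
      = algebraMap F (ExteriorAlgebra F W) ((-1 : F) ^ k.choose 2) := by
    rw [map_pow, map_neg, map_one]
  rw [hneg, ← Algebra.smul_def, smul_smul, smul_mul_assoc, mul_smul_comm, smul_smul,
    Nat.choose_two_right]
  congr 1
  ring
end

section
/- Let (Ω, 𝒫) be a probability space, k ≥ 1, and (b_{ij})_{(i,j) ∈ Fin k × Fin k} an independent family of real-valued random variables such that each b_{ij} is square-integrable with E[b_{ij}] = 0 and E[b_{ij}²] = 1. Let B(ω) be the k×k real matrix with entries B(ω) i j = b_{ij}(ω). Then E[(det B)²] = k!. -/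
open MeasureTheory ProbabilityTheory

/-- Integrability and integral of a finite product of independent integrable
random variables. -/
lemma aux_integral_indep_prod {Ω : Type} [MeasurableSpace Ω] {P : Measure Ω}
    [IsProbabilityMeasure P] {ι : Type*} (X : ι → Ω → ℝ)
    (hmeas : ∀ i, Measurable (X i))
    (hindep : iIndepFun X P)
    (hint : ∀ i, Integrable (X i) P) (s : Finset ι) :
    Integrable (fun ω => ∏ i ∈ s, X i ω) P ∧
      ∫ ω, ∏ i ∈ s, X i ω ∂P = ∏ i ∈ s, ∫ ω, X i ω ∂P := by
  classical
  induction s using Finset.cons_induction with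
  | empty => simp
  | cons a s ha ih =>
    have hip : IndepFun (∏ j ∈ s, X j) (X a) P :=
      hindep.indepFun_finsetProd_of_notMem hmeas ha
    have hprod_eq : (∏ j ∈ s, X j) = fun ω => ∏ j ∈ s, X j ω := by
      funext ω; simp
    have hint_s : Integrable (∏ j ∈ s, X j) P := by rw [hprod_eq]; exact ih.1
    have hmul : Integrable ((∏ j ∈ s, X j) * X a) P :=
      hip.integrable_mul hint_s (hint a)
    have hmul' : Integrable (fun ω => (∏ j ∈ s, X j ω) * X a ω) P := by
      have : ((∏ j ∈ s, X j) * X a) = fun ω => (∏ j ∈ s, X j ω) * X a ω := by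
        funext ω; simp
      rwa [this] at hmul
    constructor
    · have heq : (fun ω => ∏ i ∈ Finset.cons a s ha, X i ω)
          = fun ω => (∏ j ∈ s, X j ω) * X a ω := by
        funext ω; rw [Finset.prod_cons, mul_comm]
      rw [heq]; exact hmul'
    · have hInt := hip.integral_mul_eq_mul_integral hint_s.aestronglyMeasurable
        (hint a).aestronglyMeasurable
      have h1 : ∫ ω, ∏ i ∈ Finset.cons a s ha, X i ω ∂P
          = ∫ ω, (∏ j ∈ s, X j ω) * X a ω ∂P := by
        congr 1; funext ω; rw [Finset.prod_cons, mul_comm]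
      rw [h1]
      have h2 : ∫ ω, (∏ j ∈ s, X j ω) * X a ω ∂P
          = (∫ ω, ∏ j ∈ s, X j ω ∂P) * ∫ ω, X a ω ∂P := by
        have : (fun ω => (∏ j ∈ s, X j ω) * X a ω) = (∏ j ∈ s, X j) * X a := by
          funext ω; simp
        rw [this, hInt, hprod_eq]
      rw [h2, ih.2, Finset.prod_cons, mul_comm]

/-- For a `k×k` random matrix with independent, mean-zero, variance-one,
square-integrable entries, the expectation of the squared determinant is `k!`. -/
theorem expectation_det_sq_eq_factorial
    {Ω : Type} [MeasurableSpace Ω] (P : Measure Ω) [IsProbabilityMeasure P]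
    (k : ℕ) (hk : 1 ≤ k) (b : Fin k × Fin k → Ω → ℝ)
    (hmeas : ∀ p, Measurable (b p))
    (hindep : iIndepFun b P)
    (hL2 : ∀ p, MemLp (b p) 2 P)
    (hmean : ∀ p, ∫ ω, b p ω ∂P = 0)
    (hvar : ∀ p, ∫ ω, (b p ω) ^ 2 ∂P = 1) :
    ∫ ω, (Matrix.det (Matrix.of fun i j : Fin k => b (i, j) ω)) ^ 2 ∂P
      = (Nat.factorial k : ℝ) := by
  classical
  -- exponent function
  set m : Equiv.Perm (Fin k) → Equiv.Perm (Fin k) → Fin k × Fin k → ℕ :=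
    fun σ τ p => (if σ p.2 = p.1 then 1 else 0) + (if τ p.2 = p.1 then 1 else 0)
    with hm
  -- expand the squared determinant
  have hdet : ∀ ω : Ω,
      (Matrix.det (Matrix.of fun i j : Fin k => b (i, j) ω)) ^ 2
        = ∑ σ : Equiv.Perm (Fin k), ∑ τ : Equiv.Perm (Fin k),
            (((Equiv.Perm.sign σ : ℤ) : ℝ) * ((Equiv.Perm.sign τ : ℤ) : ℝ))
              * ∏ p : Fin k × Fin k, b p ω ^ m σ τ p := by
    intro ω
    rw [Matrix.det_apply']
    rw [sq, Finset.sum_mul_sum]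
    refine Finset.sum_congr rfl fun σ _ => Finset.sum_congr rfl fun τ _ => ?_
    have hfact : ∀ ρ : Equiv.Perm (Fin k),
        (∏ j : Fin k, (Matrix.of fun i j : Fin k => b (i, j) ω) (ρ j) j)
          = ∏ j : Fin k, b (ρ j, j) ω := by
      intro ρ; rfl
    rw [hfact σ, hfact τ]
    have hsplit : ∏ p : Fin k × Fin k, b p ω ^ m σ τ p
        = (∏ j : Fin k, b (σ j, j) ω) * ∏ j : Fin k, b (τ j, j) ω := by
      rw [Fintype.prod_prod_type]
      have : ∀ i j : Fin k, b (i, j) ω ^ m σ τ (i, j)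
          = (if σ j = i then b (i, j) ω else 1) * (if τ j = i then b (i, j) ω else 1) := by
        intro i j
        simp only [hm, pow_add]
        by_cases h1 : σ j = i <;> by_cases h2 : τ j = i <;> simp [h1, h2]
      simp_rw [this]
      rw [Finset.prod_comm]
      simp_rw [Finset.prod_mul_distrib]
      congr 1
      · exact Finset.prod_congr rfl fun j _ => by simp [Finset.prod_ite_eq]
      · exact Finset.prod_congr rfl fun j _ => by simp [Finset.prod_ite_eq]
    rw [hsplit]; ring
  -- integrability of powers
  have hintpow : ∀ (p : Fin k × Fin k) (n : ℕ), n ≤ 2 →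
      Integrable (fun ω => b p ω ^ n) P := by
    intro p n hn
    interval_cases n
    · simpa using (integrable_const (1 : ℝ))
    · simpa using (hL2 p).integrable one_le_two
    · have := (hL2 p).integrable_sq
      simpa [sq] using this
  have hmle : ∀ σ τ p, m σ τ p ≤ 2 := by
    intro σ τ p
    simp only [hm]
    split_ifs <;> omega
  -- independence of the powered family and product formula
  have hkey : ∀ σ τ : Equiv.Perm (Fin k),
      Integrable (fun ω => ∏ p : Fin k × Fin k, b p ω ^ m σ τ p) P ∧
        ∫ ω, ∏ p : Fin k × Fin k, b p ω ^ m σ τ p ∂P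
          = ∏ p : Fin k × Fin k, ∫ ω, b p ω ^ m σ τ p ∂P := by
    intro σ τ
    have hcomp : iIndepFun
        (fun p ω => b p ω ^ m σ τ p) P :=
      hindep.comp (fun p x => x ^ m σ τ p) (fun p => measurable_id.pow_const _)
    exact aux_integral_indep_prod _ (fun p => (hmeas p).pow_const _) hcomp
      (fun p => hintpow p _ (hmle σ τ p)) Finset.univ
  -- value of each factor's integral
  have hfac : ∀ (p : Fin k × Fin k) (n : ℕ), n = 0 ∨ n = 2 →
      ∫ ω, b p ω ^ n ∂P = 1 := by
    intro p n hn
    rcases hn with rfl | rfl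
    · simp
    · exact hvar p
  -- rewrite the integral
  have hswap : ∫ ω, (Matrix.det (Matrix.of fun i j : Fin k => b (i, j) ω)) ^ 2 ∂P
      = ∑ σ : Equiv.Perm (Fin k), ∑ τ : Equiv.Perm (Fin k),
          (((Equiv.Perm.sign σ : ℤ) : ℝ) * ((Equiv.Perm.sign τ : ℤ) : ℝ))
            * ∫ ω, ∏ p : Fin k × Fin k, b p ω ^ m σ τ p ∂P := by
    simp_rw [hdet]
    rw [integral_finset_sum]
    · refine Finset.sum_congr rfl fun σ _ => ?_
      rw [integral_finset_sum]
      · exact Finset.sum_congr rfl fun τ _ => integral_const_mul _ _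
      · intro τ _
        exact ((hkey σ τ).1).const_mul _
    · intro σ _
      exact integrable_finset_sum _ fun τ _ => ((hkey σ τ).1).const_mul _
  rw [hswap]
  -- evaluate the double sum
  have hterm : ∀ σ τ : Equiv.Perm (Fin k),
      (((Equiv.Perm.sign σ : ℤ) : ℝ) * ((Equiv.Perm.sign τ : ℤ) : ℝ))
        * ∫ ω, ∏ p : Fin k × Fin k, b p ω ^ m σ τ p ∂P
      = if τ = σ then 1 else 0 := by
    intro σ τ
    rw [(hkey σ τ).2]
    by_cases hστ : τ = σ
    · subst hστ
      have : ∀ p : Fin k × Fin k, ∫ ω, b p ω ^ m τ τ p ∂P = 1 := by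
        intro p
        refine hfac p _ ?_
        simp only [hm]
        split_ifs <;> simp
      rw [Finset.prod_congr rfl fun p _ => this p]
      simp only [Finset.prod_const_one, mul_one, if_pos rfl]
      rcases Int.units_eq_one_or (Equiv.Perm.sign τ) with h | h <;> rw [h] <;> norm_num
    · rw [if_neg hστ]
      have : ∃ j : Fin k, σ j ≠ τ j := by
        by_contra h
        push_neg at h
        exact hστ (Equiv.ext h).symm
      obtain ⟨j, hj⟩ := this
      have hzero : ∫ ω, b (σ j, j) ω ^ m σ τ (σ j, j) ∂P = 0 := by
        have : m σ τ (σ j, j) = 1 := by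
          simp only [hm]
          simp [Ne.symm hj]
        rw [this]
        simpa using hmean (σ j, j)
      rw [Finset.prod_eq_zero (Finset.mem_univ (σ j, j)) hzero, mul_zero]
  simp_rw [hterm]
  simp [Finset.sum_ite_eq, Fintype.card_perm]
end

section
/- Let μ₁ be the uniform probability measure on {−1, 1}, i.e. μ₁ = (1/2)·δ_{−1} + (1/2)·δ_1 on ℝ, and for k ≥ 1 let P be the product measure ⊗_{(i,j) ∈ Fin k × Fin k} μ₁ on the space of functions (Fin k × Fin k) → ℝ, viewed as k×k real matrices B (Bernoulli matrices). Then ∫ (det B)² dP(B) = k! and ∫ (det B)⁴ dP(B) ≤ (k!)² · k³. -/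
open MeasureTheory Equiv Finset
open scoped ENNReal

noncomputable def ber : Measure ℝ :=
  ((1 : ℝ≥0∞) / 2) • Measure.dirac (-1 : ℝ) + ((1 : ℝ≥0∞) / 2) • Measure.dirac (1 : ℝ)

instance : IsProbabilityMeasure ber := by
  constructor
  simp [ber, ENNReal.inv_two_add_inv_two]

lemma integrable_ber (f : ℝ → ℝ) (hf : Measurable f) : Integrable f ber := by
  have h1 : ∀ a : ℝ, Integrable f (Measure.dirac a) := by
    intro a
    refine ⟨hf.aestronglyMeasurable, ?_⟩
    show (∫⁻ x, ‖f x‖₊ ∂Measure.dirac a) < ⊤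
    rw [lintegral_dirac' _ (by measurability)]
    exact ENNReal.coe_lt_top
  rw [ber]
  exact ((h1 _).smul_measure (by simp)).add_measure ((h1 _).smul_measure (by simp))

lemma integral_ber (f : ℝ → ℝ) (hf : Measurable f) :
    ∫ x, f x ∂ber = (f (-1) + f 1) / 2 := by
  have h1 : ∀ a : ℝ, Integrable f (((1 : ℝ≥0∞)/2) • Measure.dirac a) := by
    intro a
    refine Integrable.smul_measure ⟨hf.aestronglyMeasurable, ?_⟩ (by simp)
    show (∫⁻ x, ‖f x‖₊ ∂Measure.dirac a) < ⊤
    rw [lintegral_dirac' _ (by measurability)]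
    exact ENNReal.coe_lt_top
  rw [ber, integral_add_measure (h1 _) (h1 _), integral_smul_measure, integral_smul_measure,
    integral_dirac, integral_dirac]
  simp only [ENNReal.toReal_div, ENNReal.toReal_one, ENNReal.toReal_ofNat, smul_eq_mul]
  ring

lemma ber_pow (n : ℕ) : ∫ x, x ^ n ∂ber = if Even n then (1:ℝ) else 0 := by
  rw [integral_ber _ (by measurability)]
  rcases Nat.even_or_odd n with h | h
  · rw [h.neg_one_pow]; simp [h]
  · rw [h.neg_one_pow]; simp [h, Nat.not_even_iff_odd.mpr h]

lemma pi_integrable (ι : Type*) [Fintype ι] (f : ι → ℝ → ℝ) (hf : ∀ i, Integrable (f i) ber) :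
    Integrable (fun b : ι → ℝ => ∏ p, f p (b p)) (Measure.pi fun _ => ber) := by
  letI : MeasureSpace ℝ := { volume := ber }
  haveI : IsProbabilityMeasure (volume : Measure ℝ) := inferInstanceAs (IsProbabilityMeasure ber)
  haveI : SigmaFinite (volume : Measure ℝ) := inferInstance
  exact Integrable.fintype_prod (𝕜 := ℝ) hf

lemma pi_int (ι : Type*) [Fintype ι] (m : ι → ℕ) :
    ∫ b : ι → ℝ, ∏ p, (b p) ^ (m p) ∂(Measure.pi fun _ => ber)
      = ∏ p, (if Even (m p) then (1:ℝ) else 0) := by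
  letI : MeasureSpace ℝ := { volume := ber }
  haveI : IsProbabilityMeasure (volume : Measure ℝ) := inferInstanceAs (IsProbabilityMeasure ber)
  haveI : SigmaFinite (volume : Measure ℝ) := inferInstance
  rw [show (∫ b : ι → ℝ, ∏ p, (b p) ^ (m p) ∂(Measure.pi fun _ => ber))
      = ∫ b : ι → ℝ, ∏ p, (b p) ^ (m p) from rfl]
  rw [MeasureTheory.integral_fintype_prod_volume_eq_prod (fun (p : ι) (x : ℝ) => x ^ (m p))]
  exact Finset.prod_congr rfl fun p _ => ber_pow (m p)
section DetExp

variable {k : ℕ}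

/-- exponent pattern of a permutation -/
def ee (σ : Equiv.Perm (Fin k)) : Fin k × Fin k → ℕ := fun p => if σ p.2 = p.1 then 1 else 0

noncomputable def sgnR (σ : Equiv.Perm (Fin k)) : ℝ := ((Equiv.Perm.sign σ : ℤ) : ℝ)

lemma prod_pow_ee (σ : Equiv.Perm (Fin k)) (b : Fin k × Fin k → ℝ) :
    ∏ p : Fin k × Fin k, (b p) ^ (ee σ p) = ∏ i, b (σ i, i) := by
  rw [Fintype.prod_prod_type]
  rw [Finset.prod_comm]
  refine Finset.prod_congr rfl fun i _ => ?_
  have : ∀ a : Fin k, (b (a, i)) ^ (ee σ (a, i)) = if σ i = a then b (a, i) else 1 := by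
    intro a
    by_cases h : σ i = a <;> simp [ee, h]
  simp_rw [this]
  simp

lemma det_eq (b : Fin k × Fin k → ℝ) :
    Matrix.det (Matrix.of fun i j : Fin k => b (i, j))
      = ∑ σ : Equiv.Perm (Fin k), sgnR σ * ∏ p : Fin k × Fin k, (b p) ^ (ee σ p) := by
  rw [Matrix.det_apply']
  refine Finset.sum_congr rfl fun σ _ => ?_
  rw [prod_pow_ee]
  rfl

lemma det_sq (b : Fin k × Fin k → ℝ) :
    (Matrix.det (Matrix.of fun i j : Fin k => b (i, j))) ^ 2
      = ∑ q : Equiv.Perm (Fin k) × Equiv.Perm (Fin k),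
          (sgnR q.1 * sgnR q.2) * ∏ p : Fin k × Fin k, (b p) ^ (ee q.1 p + ee q.2 p) := by
  rw [pow_two, det_eq, Finset.sum_mul_sum, ← Fintype.sum_prod_type']
  refine Fintype.sum_congr _ _ fun q => ?_
  simp_rw [pow_add, Finset.prod_mul_distrib]
  ring

lemma det_four (b : Fin k × Fin k → ℝ) :
    (Matrix.det (Matrix.of fun i j : Fin k => b (i, j))) ^ 4
      = ∑ r : (Equiv.Perm (Fin k) × Equiv.Perm (Fin k)) × Equiv.Perm (Fin k) × Equiv.Perm (Fin k),
          (sgnR r.1.1 * sgnR r.1.2 * (sgnR r.2.1 * sgnR r.2.2)) *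
            ∏ p : Fin k × Fin k, (b p) ^ (ee r.1.1 p + ee r.1.2 p + (ee r.2.1 p + ee r.2.2 p)) := by
  have : (4 : ℕ) = 2 * 2 := rfl
  rw [this, pow_mul, det_sq, pow_two, Finset.sum_mul_sum, ← Fintype.sum_prod_type']
  refine Fintype.sum_congr _ _ fun r => ?_
  simp_rw [pow_add, Finset.prod_mul_distrib]
  ring

end DetExp
section Ints
variable {k : ℕ}

lemma prod_ind {ι : Type*} [Fintype ι] (m : ι → ℕ) :
    ∏ p, (if Even (m p) then (1:ℝ) else 0) = if (∀ p, Even (m p)) then 1 else 0 := by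
  by_cases h : ∀ p, Even (m p)
  · rw [if_pos h]
    exact Finset.prod_eq_one fun p _ => if_pos (h p)
  · push_neg at h
    obtain ⟨p, hp⟩ := h
    rw [if_neg (by push_neg; exact ⟨p, hp⟩)]
    exact Finset.prod_eq_zero (Finset.mem_univ p) (by simp [hp])

lemma sgnR_mul_self (σ : Equiv.Perm (Fin k)) : sgnR σ * sgnR σ = 1 := by
  rcases Int.units_eq_one_or (Equiv.Perm.sign σ) with h | h <;> simp [sgnR, h]

lemma sgnR_le_one (σ τ : Equiv.Perm (Fin k)) : sgnR σ * sgnR τ ≤ 1 := by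
  rcases Int.units_eq_one_or (Equiv.Perm.sign σ) with h | h <;>
    rcases Int.units_eq_one_or (Equiv.Perm.sign τ) with h' | h' <;>
      simp [sgnR, h, h']

lemma int_term (m : Fin k × Fin k → ℕ) (c : ℝ) :
    ∫ b : Fin k × Fin k → ℝ, c * ∏ p, (b p) ^ (m p) ∂(Measure.pi fun _ => ber)
      = c * if (∀ p, Even (m p)) then 1 else 0 := by
  rw [MeasureTheory.integral_const_mul, pi_int, prod_ind]

lemma integrable_term (m : Fin k × Fin k → ℕ) (c : ℝ) :
    Integrable (fun b : Fin k × Fin k → ℝ => c * ∏ p, (b p) ^ (m p))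
      (Measure.pi fun _ => ber) :=
  (pi_integrable _ (fun p x => x ^ (m p))
    (fun p => integrable_ber _ (measurable_id.pow_const _))).const_mul c

lemma int_det_sq :
    ∫ b : Fin k × Fin k → ℝ, (Matrix.det (Matrix.of fun i j : Fin k => b (i, j))) ^ 2
        ∂(Measure.pi fun _ => ber)
      = (Nat.factorial k : ℝ) := by
  have h1 : ∀ b : Fin k × Fin k → ℝ,
      (Matrix.det (Matrix.of fun i j : Fin k => b (i, j))) ^ 2
        = ∑ q : Equiv.Perm (Fin k) × Equiv.Perm (Fin k),
          (sgnR q.1 * sgnR q.2) * ∏ p : Fin k × Fin k, (b p) ^ (ee q.1 p + ee q.2 p) := det_sq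
  rw [integral_congr_ae (Filter.Eventually.of_forall h1)]
  rw [integral_finset_sum _ (fun q _ => integrable_term _ _)]
  have h2 : ∀ q : Equiv.Perm (Fin k) × Equiv.Perm (Fin k),
      (∫ b : Fin k × Fin k → ℝ,
        (sgnR q.1 * sgnR q.2) * ∏ p : Fin k × Fin k, (b p) ^ (ee q.1 p + ee q.2 p)
          ∂(Measure.pi fun _ => ber))
      = (sgnR q.1 * sgnR q.2) * if q.1 = q.2 then 1 else 0 := by
    intro q
    rw [int_term]
    congr 1
    by_cases h : q.1 = q.2
    · rw [if_pos h, if_pos]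
      intro p
      rw [h]
      exact ⟨_, rfl⟩
    · rw [if_neg h, if_neg]
      intro hall
      have hex : ∃ i, q.1 i ≠ q.2 i := by
        by_contra h'
        push_neg at h'
        exact h (Equiv.ext h')
      obtain ⟨i, hi⟩ := hex
      have := hall (q.1 i, i)
      have h2 : q.2 i ≠ q.1 i := fun hh => hi hh.symm
      simp [ee, h2] at this
  rw [Finset.sum_congr rfl (fun q _ => h2 q)]
  rw [Fintype.sum_prod_type]
  have h3 : ∀ σ : Equiv.Perm (Fin k),
      (∑ τ : Equiv.Perm (Fin k), (sgnR σ * sgnR τ) * if σ = τ then (1:ℝ) else 0) = 1 := by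
    intro σ
    rw [Finset.sum_eq_single σ]
    · simp [sgnR_mul_self]
    · intro τ _ hne
      rw [if_neg (fun h => hne h.symm), mul_zero]
    · intro h; exact absurd (Finset.mem_univ σ) h
  rw [Finset.sum_congr rfl (fun σ _ => h3 σ)]
  simp [Finset.card_univ, Fintype.card_perm]

end Ints
section Four
variable {k : ℕ}

abbrev Quad (k : ℕ) :=
  (Equiv.Perm (Fin k) × Equiv.Perm (Fin k)) × Equiv.Perm (Fin k) × Equiv.Perm (Fin k)

def C4 (r : Quad k) : Prop :=
  ∀ p : Fin k × Fin k, Even (ee r.1.1 p + ee r.1.2 p + (ee r.2.1 p + ee r.2.2 p))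

instance (r : Quad k) : Decidable (C4 r) := by unfold C4; infer_instance

lemma sgnR4_le_one (r : Quad k) : sgnR r.1.1 * sgnR r.1.2 * (sgnR r.2.1 * sgnR r.2.2) ≤ 1 := by
  rcases Int.units_eq_one_or (Equiv.Perm.sign r.1.1) with h1 | h1 <;>
  rcases Int.units_eq_one_or (Equiv.Perm.sign r.1.2) with h2 | h2 <;>
  rcases Int.units_eq_one_or (Equiv.Perm.sign r.2.1) with h3 | h3 <;>
  rcases Int.units_eq_one_or (Equiv.Perm.sign r.2.2) with h4 | h4 <;>
    simp [sgnR, h1, h2, h3, h4]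

lemma int_det_four_le :
    ∫ b : Fin k × Fin k → ℝ, (Matrix.det (Matrix.of fun i j : Fin k => b (i, j))) ^ 4
        ∂(Measure.pi fun _ => ber)
      ≤ ((Finset.univ.filter (fun r : Quad k => C4 r)).card : ℝ) := by
  have h1 : ∀ b : Fin k × Fin k → ℝ,
      (Matrix.det (Matrix.of fun i j : Fin k => b (i, j))) ^ 4
        = ∑ r : Quad k, (sgnR r.1.1 * sgnR r.1.2 * (sgnR r.2.1 * sgnR r.2.2)) *
            ∏ p : Fin k × Fin k, (b p) ^ (ee r.1.1 p + ee r.1.2 p + (ee r.2.1 p + ee r.2.2 p)) :=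
    det_four
  rw [integral_congr_ae (Filter.Eventually.of_forall h1)]
  rw [integral_finset_sum _ (fun r _ => integrable_term _ _)]
  have h2 : ∀ r : Quad k,
      (∫ b : Fin k × Fin k → ℝ,
          (sgnR r.1.1 * sgnR r.1.2 * (sgnR r.2.1 * sgnR r.2.2)) *
            ∏ p : Fin k × Fin k, (b p) ^ (ee r.1.1 p + ee r.1.2 p + (ee r.2.1 p + ee r.2.2 p))
          ∂(Measure.pi fun _ => ber))
        ≤ if C4 r then 1 else 0 := by
    intro r
    rw [int_term]
    by_cases h : C4 r
    · rw [if_pos h, if_pos (by exact h), mul_one]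
      exact sgnR4_le_one r
    · rw [if_neg h, if_neg (by exact h), mul_zero]
  calc _ ≤ ∑ r : Quad k, if C4 r then (1:ℝ) else 0 := Finset.sum_le_sum fun r _ => h2 r
    _ = _ := by rw [Finset.sum_boole]

end Four
section Count
variable {k : ℕ}

abbrev PP (k : ℕ) := Equiv.Perm (Fin k) × Equiv.Perm (Fin k)

def Qc (q : PP k) : Prop := ∀ j, q.1 j = j ∨ q.2 j = j ∨ q.1 j = q.2 j

instance (q : PP k) : Decidable (Qc q) := by unfold Qc; infer_instance

def Uf (q : PP k) : Finset (Fin k) := Finset.univ.filter fun j => q.1 j ≠ j ∧ q.1 j = q.2 j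
def Vf (q : PP k) : Finset (Fin k) := Finset.univ.filter fun j => q.1 j ≠ j ∧ q.1 j ≠ q.2 j
def Wf (q : PP k) : Finset (Fin k) := Finset.univ.filter fun j => q.2 j ≠ j ∧ q.1 j = j

lemma mem_of_apply_mem (f : Equiv.Perm (Fin k)) (U : Finset (Fin k))
    (hU : ∀ j ∈ U, f j ∈ U) {j : Fin k} (h : f j ∈ U) : j ∈ U := by
  have hsurj := Finset.surj_on_of_inj_on_of_card_le (s := U) (t := U) (fun a _ => f a)
    (fun a ha => hU a ha) (fun a₁ a₂ _ _ h => f.injective h) le_rfl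
  obtain ⟨a, ha, hae⟩ := hsurj (f j) h
  have : j = a := f.injective hae
  rwa [this]

variable {q : PP k}

lemma LU (hq : Qc q) : ∀ j ∈ Uf q, q.1 j ∈ Uf q := by
  intro j hj
  rw [Uf, Finset.mem_filter] at hj ⊢
  obtain ⟨-, hb, he⟩ := hj
  refine ⟨Finset.mem_univ _, fun hfix => hb (q.1.injective hfix), ?_⟩
  rcases hq (q.1 j) with h | h | h
  · exact absurd (q.1.injective h) hb
  · have : q.2 (q.1 j) = q.2 j := by rw [h, he]
    exact absurd (q.2.injective this) hb
  · exact h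

lemma LUg (hq : Qc q) : ∀ j ∈ Uf q, q.2 j ∈ Uf q := by
  intro j hj
  have he : q.1 j = q.2 j := (Finset.mem_filter.1 hj).2.2
  rw [← he]
  exact LU hq j hj

lemma LV (hq : Qc q) : ∀ j ∈ Vf q, q.1 j ∈ Vf q := by
  intro j hj
  rw [Vf, Finset.mem_filter] at hj ⊢
  obtain ⟨-, hb, hne⟩ := hj
  refine ⟨Finset.mem_univ _, fun hfix => hb (q.1.injective hfix), fun he' => ?_⟩
  have hmem : q.1 j ∈ Uf q := by
    rw [Uf, Finset.mem_filter]
    exact ⟨Finset.mem_univ _, fun hfix => hb (q.1.injective hfix), he'⟩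
  have : j ∈ Uf q := mem_of_apply_mem q.1 _ (LU hq) hmem
  exact hne (Finset.mem_filter.1 this).2.2

lemma LW (hq : Qc q) : ∀ j ∈ Wf q, q.2 j ∈ Wf q := by
  intro j hj
  rw [Wf, Finset.mem_filter] at hj ⊢
  obtain ⟨-, hg, hfix⟩ := hj
  refine ⟨Finset.mem_univ _, fun h' => hg (q.2.injective h'), ?_⟩
  by_contra hb'
  rcases hq (q.2 j) with h | h | h
  · exact hb' h
  · exact hg (q.2.injective h)
  · have hmem : q.2 j ∈ Uf q := by
      rw [Uf, Finset.mem_filter]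
      exact ⟨Finset.mem_univ _, hb', h⟩
    have : j ∈ Uf q := mem_of_apply_mem q.2 _ (LUg hq) hmem
    exact absurd hfix (Finset.mem_filter.1 this).2.1

lemma cardU_ne_one (hq : Qc q) : (Uf q).card ≠ 1 := by
  intro h
  obtain ⟨a, ha⟩ := Finset.card_eq_one.1 h
  have haU : a ∈ Uf q := by rw [ha]; exact Finset.mem_singleton_self a
  have := LU hq a haU
  rw [ha, Finset.mem_singleton] at this
  exact (Finset.mem_filter.1 haU).2.1 this

lemma cardV_ne_one (hq : Qc q) : (Vf q).card ≠ 1 := by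
  intro h
  obtain ⟨a, ha⟩ := Finset.card_eq_one.1 h
  have haU : a ∈ Vf q := by rw [ha]; exact Finset.mem_singleton_self a
  have := LV hq a haU
  rw [ha, Finset.mem_singleton] at this
  exact (Finset.mem_filter.1 haU).2.1 this

lemma cardW_ne_one (hq : Qc q) : (Wf q).card ≠ 1 := by
  intro h
  obtain ⟨a, ha⟩ := Finset.card_eq_one.1 h
  have haU : a ∈ Wf q := by rw [ha]; exact Finset.mem_singleton_self a
  have := LW hq a haU
  rw [ha, Finset.mem_singleton] at this
  exact (Finset.mem_filter.1 haU).2.1 this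

lemma dUV (q : PP k) : Disjoint (Uf q) (Vf q) := by
  rw [Finset.disjoint_left]
  intro a ha ha'
  exact (Finset.mem_filter.1 ha').2.2 (Finset.mem_filter.1 ha).2.2

lemma dUW (q : PP k) : Disjoint (Uf q) (Wf q) := by
  rw [Finset.disjoint_left]
  intro a ha ha'
  exact (Finset.mem_filter.1 ha).2.1 (Finset.mem_filter.1 ha').2.2

lemma dVW (q : PP k) : Disjoint (Vf q) (Wf q) := by
  rw [Finset.disjoint_left]
  intro a ha ha'
  exact (Finset.mem_filter.1 ha).2.1 (Finset.mem_filter.1 ha').2.2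

end Count
section CountCard
variable {k : ℕ}

lemma arith_le (u v w k : ℕ) (h : u + v + w ≤ k) :
    k.choose (u+v) * ((u+v).choose u * (k-u-v).choose w)
      * (u.factorial * v.factorial * w.factorial) ≤ k.factorial := by
  have huv : u ≤ u + v := Nat.le_add_right u v
  have e1 : (u+v).choose u * u.factorial * v.factorial = (u+v).factorial := by
    have := Nat.choose_mul_factorial_mul_factorial huv
    simpa [Nat.add_sub_cancel_left] using this
  have hw : w ≤ k - u - v := by omega
  have e2 : (k-u-v).choose w * w.factorial ≤ (k-u-v).factorial := by
    calc (k-u-v).choose w * w.factorial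
        ≤ (k-u-v).choose w * w.factorial * (k-u-v-w).factorial :=
          Nat.le_mul_of_pos_right _ (Nat.factorial_pos _)
      _ = (k-u-v).factorial := Nat.choose_mul_factorial_mul_factorial hw
  have e3 : k.choose (u+v) * (u+v).factorial * (k-u-v).factorial = k.factorial := by
    have := Nat.choose_mul_factorial_mul_factorial (show u+v ≤ k by omega)
    have hsub : k - (u+v) = k - u - v := by omega
    rw [hsub] at this
    exact this
  calc k.choose (u+v) * ((u+v).choose u * (k-u-v).choose w)
        * (u.factorial * v.factorial * w.factorial)
      = (k.choose (u+v)) * ((u+v).choose u * u.factorial * v.factorial)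
          * ((k-u-v).choose w * w.factorial) := by ring
    _ = k.choose (u+v) * (u+v).factorial * ((k-u-v).choose w * w.factorial) := by rw [e1]
    _ ≤ k.choose (u+v) * (u+v).factorial * (k-u-v).factorial :=
        Nat.mul_le_mul_left _ e2
    _ = k.factorial := e3

def permEmb (f : Equiv.Perm (Fin k)) (U : Finset (Fin k)) (hU : ∀ j ∈ U, f j ∈ U) : ↥U ↪ ↥U :=
  ⟨fun x => ⟨f x, hU x x.2⟩, fun a b h => Subtype.ext (f.injective (congrArg Subtype.val h))⟩

lemma permEmb_apply (f : Equiv.Perm (Fin k)) (U : Finset (Fin k)) (hU : ∀ j ∈ U, f j ∈ U)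
    (x : ↥U) : ((permEmb f U hU) x : Fin k) = f x := rfl

lemma fiber_le (u v w : ℕ) :
    (((Finset.univ.filter (fun q : PP k => Qc q))).filter
      (fun q => (Uf q).card = u ∧ (Vf q).card = v ∧ (Wf q).card = w)).card
      ≤ k.factorial := by
  classical
  set F := (((Finset.univ.filter (fun q : PP k => Qc q))).filter
      (fun q => (Uf q).card = u ∧ (Vf q).card = v ∧ (Wf q).card = w)) with hF
  rcases F.eq_empty_or_nonempty with hFe | ⟨q₀, hq₀⟩
  · rw [hFe]; simp [Nat.factorial_pos k |>.le]
  · -- u + v + w ≤ k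
    have hmemF : ∀ q ∈ F, Qc q ∧ (Uf q).card = u ∧ (Vf q).card = v ∧ (Wf q).card = w := by
      intro q hq
      rw [hF, Finset.mem_filter, Finset.mem_filter] at hq
      exact ⟨hq.1.2, hq.2⟩
    obtain ⟨hq₀Q, hu₀, hv₀, hw₀⟩ := hmemF q₀ hq₀
    have hsum : u + v + w ≤ k := by
      have hd1 : Disjoint (Uf q₀) (Vf q₀) := dUV q₀
      have hd2 : Disjoint (Uf q₀ ∪ Vf q₀) (Wf q₀) :=
        Finset.disjoint_union_left.mpr ⟨dUW q₀, dVW q₀⟩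
      have h1 : (Uf q₀ ∪ Vf q₀ ∪ Wf q₀).card = u + v + w := by
        rw [Finset.card_union_of_disjoint hd2, Finset.card_union_of_disjoint hd1, hu₀, hv₀, hw₀]
      have h2 := Finset.card_le_univ (Uf q₀ ∪ Vf q₀ ∪ Wf q₀)
      rw [h1, Fintype.card_fin] at h2
      exact h2
    set Z : Finset (Finset (Fin k) × Finset (Fin k) × Finset (Fin k)) :=
      Finset.univ.filter (fun t => t.2.1 ⊆ t.1 ∧ t.1.card = u + v ∧ t.2.1.card = u
        ∧ t.2.2 ⊆ t.1ᶜ ∧ t.2.2.card = w) with hZ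
    have hmapsto : ∀ q ∈ F, (Uf q ∪ Vf q, Uf q, Wf q) ∈ Z := by
      intro q hq
      obtain ⟨hQ, hu, hv, hw⟩ := hmemF q hq
      rw [hZ, Finset.mem_filter]
      refine ⟨Finset.mem_univ _, Finset.subset_union_left, ?_, hu, ?_, hw⟩
      · rw [Finset.card_union_of_disjoint (dUV q), hu, hv]
      · intro a ha
        rw [Finset.mem_compl]
        intro hmem
        rcases Finset.mem_union.1 hmem with h' | h'
        · exact (Finset.disjoint_left.1 (dUW q)) h' ha
        · exact (Finset.disjoint_left.1 (dVW q)) h' ha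
    have step1 : F.card = ∑ z ∈ Z, (F.filter (fun q => (Uf q ∪ Vf q, Uf q, Wf q) = z)).card :=
      Finset.card_eq_sum_card_fiberwise hmapsto
    have step2 : ∀ z ∈ Z, (F.filter (fun q => (Uf q ∪ Vf q, Uf q, Wf q) = z)).card
        ≤ u.factorial * v.factorial * w.factorial := by
      intro z hz
      rw [hZ, Finset.mem_filter] at hz
      obtain ⟨-, hzsub, hzcard1, hzcardU, hzsubW, hzcardW⟩ := hz
      set U₀ := z.2.1 with hU₀
      set V₀ := z.1 \ z.2.1 with hV₀
      set W₀ := z.2.2 with hW₀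
      have hcardV₀ : V₀.card = v := by
        rw [hV₀, Finset.card_sdiff_of_subset hzsub, hzcard1, hzcardU]
        omega
      set Fib := F.filter (fun q => (Uf q ∪ Vf q, Uf q, Wf q) = z) with hFib
      have hmem2 : ∀ q ∈ Fib, Qc q ∧ Uf q = U₀ ∧ Vf q = V₀ ∧ Wf q = W₀ := by
        intro q hq
        rw [hFib, Finset.mem_filter] at hq
        obtain ⟨hqF, hΦ⟩ := hq
        have hQ := (hmemF q hqF).1
        rw [Prod.ext_iff] at hΦ
        obtain ⟨h1, hΦ2⟩ := hΦ
        rw [Prod.ext_iff] at hΦ2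
        obtain ⟨h2, h3⟩ := hΦ2
        refine ⟨hQ, h2, ?_, h3⟩
        rw [hV₀, ← h1, ← h2, Finset.union_sdiff_cancel_left (dUV q)]
      have hcount : Fib.card = Fintype.card {q // q ∈ Fib} := (Fintype.card_coe _).symm
      have hinj : Fib.card ≤ Fintype.card ((↥U₀ ↪ ↥U₀) × (↥V₀ ↪ ↥V₀) × (↥W₀ ↪ ↥W₀)) := by
        rw [hcount]
        refine Fintype.card_le_of_injective (fun q =>
          (permEmb q.val.1 U₀ (by
              obtain ⟨hQ, hU, hV, hW⟩ := hmem2 q.val q.property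
              rw [← hU]; exact LU hQ),
           permEmb q.val.1 V₀ (by
              obtain ⟨hQ, hU, hV, hW⟩ := hmem2 q.val q.property
              rw [← hV]; exact LV hQ),
           permEmb q.val.2 W₀ (by
              obtain ⟨hQ, hU, hV, hW⟩ := hmem2 q.val q.property
              rw [← hW]; exact LW hQ))) ?_
        intro q₁ q₂ hG
        rw [Prod.ext_iff] at hG
        obtain ⟨hG1, hG2'⟩ := hG
        rw [Prod.ext_iff] at hG2'
        obtain ⟨hG2, hG3⟩ := hG2'
        obtain ⟨hQ₁, hU₁, hV₁, hW₁⟩ := hmem2 q₁.val q₁.property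
        obtain ⟨hQ₂, hU₂, hV₂, hW₂⟩ := hmem2 q₂.val q₂.property
        have hval1 : ∀ x : ↥U₀, q₁.val.1 x = q₂.val.1 x := by
          intro x
          have := congrArg Subtype.val (DFunLike.congr_fun hG1 x)
          exact this
        have hval2 : ∀ x : ↥V₀, q₁.val.1 x = q₂.val.1 x := by
          intro x
          have := congrArg Subtype.val (DFunLike.congr_fun hG2 x)
          exact this
        have hval3 : ∀ x : ↥W₀, q₁.val.2 x = q₂.val.2 x := by
          intro x
          have := congrArg Subtype.val (DFunLike.congr_fun hG3 x)
          exact this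
        have hbeta : q₁.val.1 = q₂.val.1 := by
          apply Equiv.ext
          intro j
          by_cases hjU : j ∈ U₀
          · exact hval1 ⟨j, hjU⟩
          · by_cases hjV : j ∈ V₀
            · exact hval2 ⟨j, hjV⟩
            · have fix1 : q₁.val.1 j = j := by
                by_contra hne
                by_cases he : q₁.val.1 j = q₁.val.2 j
                · exact hjU (hU₁ ▸ (Finset.mem_filter.2 ⟨Finset.mem_univ _, hne, he⟩))
                · exact hjV (hV₁ ▸ (Finset.mem_filter.2 ⟨Finset.mem_univ _, hne, he⟩))
              have fix2 : q₂.val.1 j = j := by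
                by_contra hne
                by_cases he : q₂.val.1 j = q₂.val.2 j
                · exact hjU (hU₂ ▸ (Finset.mem_filter.2 ⟨Finset.mem_univ _, hne, he⟩))
                · exact hjV (hV₂ ▸ (Finset.mem_filter.2 ⟨Finset.mem_univ _, hne, he⟩))
              rw [fix1, fix2]
        have hgamma : q₁.val.2 = q₂.val.2 := by
          apply Equiv.ext
          intro j
          by_cases hjU : j ∈ U₀
          · have e1 : q₁.val.1 j = q₁.val.2 j := (Finset.mem_filter.1 (hU₁ ▸ hjU : j ∈ Uf q₁.val)).2.2
            have e2 : q₂.val.1 j = q₂.val.2 j := (Finset.mem_filter.1 (hU₂ ▸ hjU : j ∈ Uf q₂.val)).2.2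
            rw [← e1, ← e2]
            exact hval1 ⟨j, hjU⟩
          · by_cases hjW : j ∈ W₀
            · exact hval3 ⟨j, hjW⟩
            · have fix1 : q₁.val.2 j = j := by
                by_contra hne
                by_cases hfix : q₁.val.1 j = j
                · exact hjW (hW₁ ▸ (Finset.mem_filter.2 ⟨Finset.mem_univ _, hne, hfix⟩))
                · rcases hQ₁ j with h | h | h
                  · exact hfix h
                  · exact hne h
                  · exact hjU (hU₁ ▸ (Finset.mem_filter.2 ⟨Finset.mem_univ _, hfix, h⟩))
              have fix2 : q₂.val.2 j = j := by
                by_contra hne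
                by_cases hfix : q₂.val.1 j = j
                · exact hjW (hW₂ ▸ (Finset.mem_filter.2 ⟨Finset.mem_univ _, hne, hfix⟩))
                · rcases hQ₂ j with h | h | h
                  · exact hfix h
                  · exact hne h
                  · exact hjU (hU₂ ▸ (Finset.mem_filter.2 ⟨Finset.mem_univ _, hfix, h⟩))
              rw [fix1, fix2]
        exact Subtype.ext (Prod.ext hbeta hgamma)
      calc Fib.card ≤ Fintype.card ((↥U₀ ↪ ↥U₀) × (↥V₀ ↪ ↥V₀) × (↥W₀ ↪ ↥W₀)) := hinj
        _ = u.factorial * v.factorial * w.factorial := by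
            rw [Fintype.card_prod, Fintype.card_prod, Fintype.card_embedding_eq,
              Fintype.card_embedding_eq, Fintype.card_embedding_eq,
              Fintype.card_coe, Fintype.card_coe, Fintype.card_coe,
              hzcardU, hcardV₀, hzcardW,
              Nat.descFactorial_self, Nat.descFactorial_self, Nat.descFactorial_self, mul_assoc]
    have step3 : Z.card ≤ k.choose (u+v) * ((u+v).choose u * (k-u-v).choose w) := by
      have hmapsto3 : ∀ t ∈ Z, t.1 ∈ Finset.powersetCard (u+v) Finset.univ := by
        intro t ht
        rw [hZ, Finset.mem_filter] at ht
        exact Finset.mem_powersetCard.2 ⟨Finset.subset_univ _, ht.2.2.1⟩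
      rw [Finset.card_eq_sum_card_fiberwise hmapsto3]
      have hfib3 : ∀ S ∈ Finset.powersetCard (u+v) (Finset.univ : Finset (Fin k)),
          (Z.filter (fun t => t.1 = S)).card ≤ (u+v).choose u * (k-u-v).choose w := by
        intro S hS
        have hScard : S.card = u + v := (Finset.mem_powersetCard.1 hS).2
        have := Finset.card_le_card_of_injOn (fun t => (t.2.1, t.2.2))
          (s := Z.filter (fun t => t.1 = S))
          (t := (Finset.powersetCard u S) ×ˢ (Finset.powersetCard w Sᶜ)) ?_ ?_
        · refine le_trans this ?_
          rw [Finset.card_product, Finset.card_powersetCard, Finset.card_powersetCard,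
            hScard, Finset.card_compl, Fintype.card_fin, hScard]
          have : k - (u+v) = k - u - v := by omega
          rw [this]
        · intro t ht
          rw [Finset.mem_coe, Finset.mem_filter, hZ, Finset.mem_filter] at ht
          obtain ⟨⟨-, hsub, hc1, hcU, hsubW, hcW⟩, hteq⟩ := ht
          rw [Finset.mem_coe, Finset.mem_product]
          constructor
          · exact Finset.mem_powersetCard.2 ⟨hteq ▸ hsub, hcU⟩
          · exact Finset.mem_powersetCard.2 ⟨by rw [← hteq]; exact hsubW, hcW⟩
        · intro t₁ ht₁ t₂ ht₂ heq
          simp only [Finset.coe_filter, Set.mem_setOf_eq] at ht₁ ht₂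
          rw [Prod.ext_iff] at heq
          obtain ⟨e1, e2⟩ := heq
          have : t₁.1 = t₂.1 := by rw [ht₁.2, ht₂.2]
          exact Prod.ext this (Prod.ext e1 e2)
      calc ∑ S ∈ Finset.powersetCard (u+v) (Finset.univ : Finset (Fin k)),
            (Z.filter (fun t => t.1 = S)).card
          ≤ ∑ S ∈ Finset.powersetCard (u+v) (Finset.univ : Finset (Fin k)),
            ((u+v).choose u * (k-u-v).choose w) := Finset.sum_le_sum hfib3
        _ = k.choose (u+v) * ((u+v).choose u * (k-u-v).choose w) := by
            rw [Finset.sum_const, smul_eq_mul, Finset.card_powersetCard,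
              Finset.card_univ, Fintype.card_fin]
    calc F.card = ∑ z ∈ Z, (F.filter (fun q => (Uf q ∪ Vf q, Uf q, Wf q) = z)).card := step1
      _ ≤ ∑ _z ∈ Z, (u.factorial * v.factorial * w.factorial) := Finset.sum_le_sum step2
      _ = Z.card * (u.factorial * v.factorial * w.factorial) := by
          rw [Finset.sum_const, smul_eq_mul]
      _ ≤ (k.choose (u+v) * ((u+v).choose u * (k-u-v).choose w))
            * (u.factorial * v.factorial * w.factorial) :=
          Nat.mul_le_mul_right _ step3
      _ ≤ k.factorial := arith_le u v w k hsum

end CountCard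
section CountQ
variable {k : ℕ}

lemma count_Q (hk : 1 ≤ k) :
    (Finset.univ.filter (fun q : PP k => Qc q)).card ≤ k.factorial * k^3 := by
  classical
  set E1 : Finset ℕ := (Finset.range (k+1)).erase 1 with hE1
  have hmaps : ∀ q ∈ Finset.univ.filter (fun q : PP k => Qc q),
      ((Uf q).card, (Vf q).card, (Wf q).card) ∈ E1 ×ˢ E1 ×ˢ E1 := by
    intro q hq
    have hQ : Qc q := (Finset.mem_filter.1 hq).2
    have hcard : ∀ s : Finset (Fin k), s.card ∈ Finset.range (k+1) := by
      intro s
      rw [Finset.mem_range]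
      have := Finset.card_le_univ s
      rw [Fintype.card_fin] at this
      omega
    rw [Finset.mem_product]
    refine ⟨Finset.mem_erase.2 ⟨cardU_ne_one hQ, hcard (Uf q)⟩, ?_⟩
    rw [Finset.mem_product]
    exact ⟨Finset.mem_erase.2 ⟨cardV_ne_one hQ, hcard (Vf q)⟩,
      Finset.mem_erase.2 ⟨cardW_ne_one hQ, hcard (Wf q)⟩⟩
  rw [Finset.card_eq_sum_card_fiberwise hmaps]
  have hbound : ∀ s ∈ E1 ×ˢ E1 ×ˢ E1,
      ((Finset.univ.filter (fun q : PP k => Qc q)).filter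
        (fun q => ((Uf q).card, (Vf q).card, (Wf q).card) = s)).card ≤ k.factorial := by
    intro s _
    refine le_trans (Finset.card_le_card ?_) (fiber_le s.1 s.2.1 s.2.2)
    intro q hq
    rw [Finset.mem_filter] at hq ⊢
    refine ⟨hq.1, ?_⟩
    have h := hq.2
    rw [Prod.ext_iff] at h
    obtain ⟨a1, a2'⟩ := h
    rw [Prod.ext_iff] at a2'
    obtain ⟨a2, a3⟩ := a2'
    exact ⟨a1, a2, a3⟩
  have hcardE1 : E1.card = k := by
    rw [hE1, Finset.card_erase_of_mem (Finset.mem_range.2 (by omega)), Finset.card_range]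
    omega
  calc ∑ s ∈ E1 ×ˢ E1 ×ˢ E1,
        ((Finset.univ.filter (fun q : PP k => Qc q)).filter
          (fun q => ((Uf q).card, (Vf q).card, (Wf q).card) = s)).card
      ≤ ∑ _s ∈ E1 ×ˢ E1 ×ˢ E1, k.factorial := Finset.sum_le_sum hbound
    _ = (E1 ×ˢ E1 ×ˢ E1).card * k.factorial := by rw [Finset.sum_const, smul_eq_mul]
    _ = k.factorial * k^3 := by
        rw [Finset.card_product, Finset.card_product, hcardE1]
        ring

lemma ee_eq_one {σ : Equiv.Perm (Fin k)} {x i : Fin k} (h : σ i = x) : ee σ (x, i) = 1 :=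
  if_pos h

lemma ee_eq_zero {σ : Equiv.Perm (Fin k)} {x i : Fin k} (h : ¬ (σ i = x)) : ee σ (x, i) = 0 :=
  if_neg h

lemma C4_majority (r : Quad k) (hr : C4 r) (i : Fin k) :
    r.1.2 i = r.1.1 i ∨ r.2.1 i = r.1.1 i ∨ r.1.2 i = r.2.1 i := by
  by_contra hcon
  push_neg at hcon
  obtain ⟨h1, h2, h3⟩ := hcon
  have e1 := hr (r.1.1 i, i)
  rw [ee_eq_one rfl, ee_eq_zero h1, ee_eq_zero h2] at e1
  have hπ : r.2.2 i = r.1.1 i := by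
    by_cases hy : r.2.2 i = r.1.1 i
    · exact hy
    · rw [ee_eq_zero hy] at e1
      exact absurd e1 (by decide)
  have e2 := hr (r.1.2 i, i)
  have c1 : ¬ (r.1.1 i = r.1.2 i) := fun hh => h1 hh.symm
  have c3 : ¬ (r.2.1 i = r.1.2 i) := fun hh => h3 hh.symm
  have c4 : ¬ (r.2.2 i = r.1.2 i) := by
    intro hh
    exact h1 (by rw [← hh, hπ])
  rw [ee_eq_zero c1, ee_eq_one rfl, ee_eq_zero c3, ee_eq_zero c4] at e2
  exact absurd e2 (by decide)

lemma C4_pi (r : Quad k) (hr : C4 r) (i : Fin k) :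
    r.2.2 i = if r.1.2 i = r.1.1 i then r.2.1 i
      else if r.2.1 i = r.1.1 i then r.1.2 i else r.1.1 i := by
  by_cases h : r.1.2 i = r.1.1 i
  · rw [if_pos h]
    have e := hr (r.2.1 i, i)
    by_cases hy : r.2.2 i = r.2.1 i
    · exact hy
    · exfalso
      rw [ee_eq_one rfl (σ := r.2.1), ee_eq_zero hy] at e
      by_cases hx : r.1.1 i = r.2.1 i
      · have hx2 : r.1.2 i = r.2.1 i := by rw [h, hx]
        rw [ee_eq_one hx, ee_eq_one hx2] at e
        exact absurd e (by decide)
      · have hx2 : ¬ (r.1.2 i = r.2.1 i) := fun hh => hx (by rw [← h, hh])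
        rw [ee_eq_zero hx, ee_eq_zero hx2] at e
        exact absurd e (by decide)
  · rw [if_neg h]
    by_cases h2 : r.2.1 i = r.1.1 i
    · rw [if_pos h2]
      have e := hr (r.1.2 i, i)
      have c1 : ¬ (r.1.1 i = r.1.2 i) := fun hh => h hh.symm
      have c3 : ¬ (r.2.1 i = r.1.2 i) := fun hh => h (by rw [← hh, h2])
      by_cases hy : r.2.2 i = r.1.2 i
      · exact hy
      · exfalso
        rw [ee_eq_zero c1, ee_eq_one rfl, ee_eq_zero c3, ee_eq_zero hy] at e
        exact absurd e (by decide)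
    · rw [if_neg h2]
      have e := hr (r.1.1 i, i)
      by_cases hy : r.2.2 i = r.1.1 i
      · exact hy
      · exfalso
        rw [ee_eq_one rfl, ee_eq_zero h, ee_eq_zero h2, ee_eq_zero hy] at e
        exact absurd e (by decide)

lemma quad_card_le (hk : 1 ≤ k) :
    (Finset.univ.filter (fun r : Quad k => C4 r)).card
      ≤ k.factorial * (k.factorial * k^3) := by
  classical
  have step : (Finset.univ.filter (fun r : Quad k => C4 r)).card
      ≤ ((Finset.univ : Finset (Equiv.Perm (Fin k)))
          ×ˢ (Finset.univ.filter (fun q : PP k => Qc q))).card := by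
    apply Finset.card_le_card_of_injOn
      (fun r => (r.1.1, (r.1.2 * r.1.1⁻¹, r.2.1 * r.1.1⁻¹)))
    · intro r hr
      have hC : C4 r := (Finset.mem_filter.1 hr).2
      rw [Finset.mem_coe, Finset.mem_product]
      refine ⟨Finset.mem_univ _, Finset.mem_filter.2 ⟨Finset.mem_univ _, ?_⟩⟩
      intro j
      have hj : r.1.1 (r.1.1⁻¹ j) = j := Equiv.apply_symm_apply r.1.1 j
      have hmaj := C4_majority r hC (r.1.1⁻¹ j)
      simp only [Equiv.Perm.mul_apply]
      rcases hmaj with h | h | h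
      · exact Or.inl (by rw [h, hj])
      · exact Or.inr (Or.inl (by rw [h, hj]))
      · exact Or.inr (Or.inr h)
    · intro r₁ hr₁ r₂ hr₂ heq
      simp only [Finset.coe_filter, Set.mem_setOf_eq] at hr₁ hr₂
      have hC₁ : C4 r₁ := hr₁.2
      have hC₂ : C4 r₂ := hr₂.2
      have heq' : (r₁.1.1, (r₁.1.2 * r₁.1.1⁻¹, r₁.2.1 * r₁.1.1⁻¹))
          = (r₂.1.1, (r₂.1.2 * r₂.1.1⁻¹, r₂.2.1 * r₂.1.1⁻¹)) := heq
      have hσ : r₁.1.1 = r₂.1.1 := (Prod.ext_iff.mp heq').1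
      have hτ' : r₁.1.2 * r₁.1.1⁻¹ = r₂.1.2 * r₂.1.1⁻¹ :=
        (Prod.ext_iff.mp (Prod.ext_iff.mp heq').2).1
      have hρ' : r₁.2.1 * r₁.1.1⁻¹ = r₂.2.1 * r₂.1.1⁻¹ :=
        (Prod.ext_iff.mp (Prod.ext_iff.mp heq').2).2
      rw [hσ] at hτ' hρ'
      have hτ : r₁.1.2 = r₂.1.2 := mul_right_cancel hτ'
      have hρ : r₁.2.1 = r₂.2.1 := mul_right_cancel hρ'
      have hπ : r₁.2.2 = r₂.2.2 := by
        apply Equiv.ext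
        intro i
        rw [C4_pi r₁ hC₁ i, C4_pi r₂ hC₂ i, hσ, hτ, hρ]
      exact Prod.ext (Prod.ext hσ hτ) (Prod.ext hρ hπ)
  calc (Finset.univ.filter (fun r : Quad k => C4 r)).card
      ≤ ((Finset.univ : Finset (Equiv.Perm (Fin k)))
          ×ˢ (Finset.univ.filter (fun q : PP k => Qc q))).card := step
    _ = k.factorial * (Finset.univ.filter (fun q : PP k => Qc q)).card := by
        rw [Finset.card_product, Finset.card_univ, Fintype.card_perm, Fintype.card_fin]
    _ ≤ k.factorial * (k.factorial * k^3) :=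
        Nat.mul_le_mul_left _ (count_Q hk)

end CountQ
/-- For a `k×k` Bernoulli matrix (i.i.d. uniform `±1` entries),
the second moment of the determinant is `k!` and the fourth moment
is at most `(k!)² k³`. -/
theorem moments_det_bernoulli_matrix
    (k : ℕ) (hk : 1 ≤ k)
    (μ₁ : Measure ℝ)
    (hμ₁ : μ₁ = ((1 : ℝ≥0∞) / 2) • Measure.dirac (-1 : ℝ) +
      ((1 : ℝ≥0∞) / 2) • Measure.dirac (1 : ℝ))
    (P : Measure ((Fin k × Fin k) → ℝ))
    (hP : P = Measure.pi (fun _ : Fin k × Fin k => μ₁)) :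
    (∫ b, (Matrix.det (Matrix.of fun i j : Fin k => b (i, j))) ^ 2 ∂P
        = (Nat.factorial k : ℝ)) ∧
    (∫ b, (Matrix.det (Matrix.of fun i j : Fin k => b (i, j))) ^ 4 ∂P
        ≤ (Nat.factorial k : ℝ) ^ 2 * (k : ℝ) ^ 3) := by
  have hber : μ₁ = ber := hμ₁
  subst hP
  rw [hber]
  constructor
  · exact int_det_sq
  · calc ∫ b, (Matrix.det (Matrix.of fun i j : Fin k => b (i, j))) ^ 4
          ∂(Measure.pi fun _ => ber)
        ≤ ((Finset.univ.filter (fun r : Quad k => C4 r)).card : ℝ) := int_det_four_le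
      _ ≤ ((k.factorial * (k.factorial * k^3) : ℕ) : ℝ) :=
          Nat.cast_le.mpr (quad_card_le hk)
      _ = (Nat.factorial k : ℝ) ^ 2 * (k : ℝ) ^ 3 := by push_cast; ring
end

section
/- Let F be a field of characteristic 2 and k ∈ ℕ. Let A = MonoidAlgebra F (Multiplicative (Fin k → ZMod 2)) be the group algebra of the group ℤ₂^k over F, and for i ∈ Fin k let g_i ∈ A be the group element corresponding to the i-th standard generator (the function sending i to 1 and all other indices to 0). Then: (a) the F-linear map f : (Fin k → F) → A defined by f(v) = Σ_i v_i · (1 + g_i) satisfies f(v) · f(v) = 0 for all v; and (b) the F-algebra homomorphism Λ(F^k) → A induced by f via the universal property of the exterior algebra (ExteriorAlgebra.lift) is bijective. In particular, Λ(F^k) and the group algebra F[ℤ₂^k] are isomorphic as F-algebras. -/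
set_option maxHeartbeats 1000000
set_option synthInstance.maxHeartbeats 100000

section Aux

private lemma char2_add_self {F : Type} [Field F] [CharP F 2] {R : Type} [Ring R] [Algebra F R]
    (x : R) : x + x = 0 := by
  have h : (2 : F) = 0 := CharTwo.two_eq_zero
  rw [← two_smul F x, h, zero_smul]

private lemma ext_commute {F : Type} [Field F] [CharP F 2] {M : Type} [AddCommGroup M]
    [Module F M] (a b : ExteriorAlgebra F M) : Commute a b := by
  have hneg : ∀ x : ExteriorAlgebra F M, -x = x := fun x =>
    neg_eq_of_add_eq_zero_left (char2_add_self (F := F) x)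
  have key : ∀ m n : M, Commute (ExteriorAlgebra.ι F m) (ExteriorAlgebra.ι F n) := by
    intro m n
    have h := ExteriorAlgebra.ι_sq_zero (R := F) (m + n)
    rw [map_add, add_mul, mul_add, mul_add, ExteriorAlgebra.ι_sq_zero,
      ExteriorAlgebra.ι_sq_zero, zero_add, add_zero] at h
    show ExteriorAlgebra.ι F m * ExteriorAlgebra.ι F n
      = ExteriorAlgebra.ι F n * ExteriorAlgebra.ι F m
    rw [eq_neg_of_add_eq_zero_left h, hneg]
  induction a using ExteriorAlgebra.induction with
  | algebraMap r => exact Algebra.commutes r b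
  | ι m =>
    induction b using ExteriorAlgebra.induction with
    | algebraMap r => exact (Algebra.commutes r _).symm
    | ι n => exact key m n
    | mul x y hx hy => exact hx.mul_right hy
    | add x y hx hy => exact hx.add_right hy
  | mul x y hx hy => exact hx.mul_left hy
  | add x y hx hy => exact hx.add_left hy

private def expHom1 {B : Type} [Monoid B] (c : B) (hc : c * c = 1) :
    Multiplicative (ZMod 2) →* B where
  toFun x := c ^ (Multiplicative.toAdd x).val
  map_one' := by simp
  map_mul' x y := by
    have hc2 : c ^ 2 = 1 := by rwa [pow_two]
    show c ^ (Multiplicative.toAdd x + Multiplicative.toAdd y).val = _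
    rw [ZMod.val_add, ← pow_eq_pow_mod _ hc2, pow_add]

private def expHom {k : ℕ} {B : Type} [Monoid B] (c : Fin k → B) (hc : ∀ i, c i * c i = 1)
    (hcomm : ∀ i j, Commute (c i) (c j)) :
    Multiplicative (Fin k → ZMod 2) →* B :=
  (MonoidHom.noncommPiCoprod (fun i => expHom1 (c i) (hc i))
    (show Pairwise fun i j => ∀ x y, Commute (expHom1 (c i) (hc i) x) (expHom1 (c j) (hc j) y) from
      fun i j _ x y => (hcomm i j).pow_pow _ _)).comp
    (MulEquiv.piMultiplicative (fun _ : Fin k => ZMod 2)).toMonoidHom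

private lemma expHom_single {k : ℕ} {B : Type} [Monoid B] (c : Fin k → B)
    (hc : ∀ i, c i * c i = 1) (hcomm : ∀ i j, Commute (c i) (c j)) (i : Fin k) :
    expHom c hc hcomm (Multiplicative.ofAdd (Pi.single i (1 : ZMod 2))) = c i := by
  have h1 : (MulEquiv.piMultiplicative (fun _ : Fin k => ZMod 2))
      (Multiplicative.ofAdd (Pi.single i (1 : ZMod 2)))
      = Pi.mulSingle i (Multiplicative.ofAdd (1 : ZMod 2)) := by
    funext j
    by_cases h : j = i
    · subst h; simp
    · simp [MulEquiv.piMultiplicative, Pi.single_eq_of_ne h, Pi.mulSingle_eq_of_ne h]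
  rw [expHom, MonoidHom.comp_apply, MulEquiv.coe_toMonoidHom, h1,
    MonoidHom.noncommPiCoprod_mulSingle]
  show c i ^ (Multiplicative.toAdd (Multiplicative.ofAdd (1 : ZMod 2))).val = c i
  exact pow_one (c i)

private lemma sum_mul_self_char2 {R : Type} [CommRing R] (h2 : ∀ x : R, x + x = 0)
    {ι : Type} (s : Finset ι) (x : ι → R) :
    (∑ i ∈ s, x i) * (∑ i ∈ s, x i) = ∑ i ∈ s, x i * x i := by
  classical
  induction s using Finset.induction_on with
  | empty => simp
  | insert j s hj ih =>
    rw [Finset.sum_insert hj, Finset.sum_insert hj]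
    linear_combination ih + h2 (x j * ∑ i ∈ s, x i)

end Aux

/-- Over a field of characteristic two, the exterior algebra `Λ(F^k)` is isomorphic
to the group algebra `F[ℤ₂^k]`: the linear map `v ↦ ∑ i, v i • (1 + gᵢ)` squares to
zero pointwise, and the induced algebra homomorphism is bijective. -/
theorem exteriorAlgebra_iso_groupAlgebra_char_two
    {F : Type} [Field F] [CharP F 2] (k : ℕ)
    (g : Fin k → MonoidAlgebra F (Multiplicative (Fin k → ZMod 2)))
    (hg : ∀ i, g i = MonoidAlgebra.of F (Multiplicative (Fin k → ZMod 2))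
      (Multiplicative.ofAdd (Pi.single i (1 : ZMod 2))))
    (f : (Fin k → F) →ₗ[F] MonoidAlgebra F (Multiplicative (Fin k → ZMod 2)))
    (hf : ∀ v, f v = ∑ i : Fin k, v i • (1 + g i)) :
    (∀ v, f v * f v = 0) ∧
    ∀ (hsq : ∀ v, f v * f v = 0),
      Function.Bijective (ExteriorAlgebra.lift F ⟨f, hsq⟩) := by
  classical
  have h2A : ∀ x : MonoidAlgebra F (Multiplicative (Fin k → ZMod 2)), x + x = 0 := fun x =>
    char2_add_self (F := F) x
  have hgg : ∀ i, g i * g i = 1 := by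
    intro i
    rw [hg i, ← map_mul, ← ofAdd_add, ← Pi.single_add,
      show (1 : ZMod 2) + 1 = 0 by decide, Pi.single_zero, ofAdd_zero, map_one]
  have h1gg : ∀ i, (1 + g i) * (1 + g i) = 0 := by
    intro i
    have e : (1 + g i) * (1 + g i) = (1 + g i * g i) + (g i + g i) := by ring
    rw [e, hgg i, h2A (g i), add_zero]
    exact h2A 1
  have hsq0 : ∀ v, f v * f v = 0 := by
    intro v
    rw [hf v, sum_mul_self_char2 h2A]
    refine Finset.sum_eq_zero fun i _ => ?_
    rw [smul_mul_assoc, mul_smul_comm, h1gg i, smul_zero, smul_zero]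
  refine ⟨hsq0, ?_⟩
  intro hsq
  set L := ExteriorAlgebra.lift F ⟨f, hsq⟩ with hL
  have h2Λ : ∀ x : ExteriorAlgebra F (Fin k → F), x + x = 0 := fun x =>
    char2_add_self (F := F) x
  have hLι : ∀ i : Fin k, L (ExteriorAlgebra.ι F (Pi.single i (1 : F))) = 1 + g i := by
    intro i
    rw [hL, ExteriorAlgebra.lift_ι_apply, hf]
    rw [Finset.sum_eq_single i]
    · simp
    · intro j _ hj
      rw [Pi.single_eq_of_ne hj, zero_smul]
    · intro h; exact absurd (Finset.mem_univ i) h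
  set c : Fin k → ExteriorAlgebra F (Fin k → F) :=
    fun i => 1 + ExteriorAlgebra.ι F (Pi.single i (1 : F)) with hcdef
  have hcc : ∀ i, c i * c i = 1 := by
    intro i
    have e : c i * c i = 1 + (ExteriorAlgebra.ι F (Pi.single i (1 : F)) +
        ExteriorAlgebra.ι F (Pi.single i (1 : F))) +
        ExteriorAlgebra.ι F (Pi.single i (1 : F)) * ExteriorAlgebra.ι F (Pi.single i (1 : F)) := by
      rw [hcdef]; noncomm_ring
    rw [e, ExteriorAlgebra.ι_sq_zero, h2Λ, add_zero, add_zero]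
  have hccomm : ∀ i j, Commute (c i) (c j) := fun i j => ext_commute _ _
  set ψ := expHom c hcc hccomm with hψ
  set φ := MonoidAlgebra.lift F _ (Multiplicative (Fin k → ZMod 2)) ψ with hφ
  have hφg : ∀ i, φ (g i) = c i := by
    intro i
    rw [hg i, hφ, MonoidAlgebra.lift_of, hψ]
    exact expHom_single c hcc hccomm i
  -- φ is a left inverse of L
  have hleft : ∀ x, φ (L x) = x := by
    have e : φ.comp L = AlgHom.id F _ := by
      refine ExteriorAlgebra.hom_ext (LinearMap.ext fun m => ?_)
      show φ (L (ExteriorAlgebra.ι F m)) = ExteriorAlgebra.ι F m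
      rw [hL, ExteriorAlgebra.lift_ι_apply, hf, map_sum]
      have e1 : ∀ i, φ (m i • (1 + g i)) = m i • ExteriorAlgebra.ι F (Pi.single i (1 : F)) := by
        intro i
        rw [map_smul, map_add, map_one, hφg i, hcdef, ← add_assoc, h2Λ 1, zero_add]
      rw [Finset.sum_congr rfl fun i _ => e1 i]
      have e2 : ∀ i : Fin k, m i • (Pi.single i (1 : F) : Fin k → F) = Pi.single i (m i) := by
        intro i
        rw [← Pi.single_smul, smul_eq_mul, mul_one]
      have e3 : (∑ i, Pi.single i (m i) : Fin k → F) = m := Finset.univ_sum_single m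
      calc ∑ i, m i • ExteriorAlgebra.ι F (Pi.single i (1 : F))
          = ∑ i, ExteriorAlgebra.ι F ((Pi.single i (m i) : Fin k → F)) := by
            refine Finset.sum_congr rfl fun i _ => ?_
            rw [← map_smul, e2 i]
        _ = ExteriorAlgebra.ι F m := by rw [← map_sum, e3]
    exact fun x => DFunLike.congr_fun e x
  have hinj : Function.Injective L := Function.LeftInverse.injective hleft
  -- surjectivity
  clear_value L ψ φ
  have hmemg : ∀ i, g i ∈ L.range := by
    intro i
    refine ⟨ExteriorAlgebra.ι F (Pi.single i (1 : F)) + 1, ?_⟩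
    calc L (ExteriorAlgebra.ι F (Pi.single i (1 : F)) + 1)
        = L (ExteriorAlgebra.ι F (Pi.single i (1 : F))) + L 1 := by rw [map_add]
      _ = (1 + g i) + 1 := by rw [hLι i, map_one]
      _ = g i := by
          linear_combination h2A (1 : MonoidAlgebra F (Multiplicative (Fin k → ZMod 2)))
  have hmemof : ∀ x, MonoidAlgebra.of F (Multiplicative (Fin k → ZMod 2)) x ∈ L.range := by
    intro x
    have h1 : ∀ i, g i ^ (Multiplicative.toAdd x i).val
        = MonoidAlgebra.of F (Multiplicative (Fin k → ZMod 2))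
          (Multiplicative.ofAdd (Pi.single i (Multiplicative.toAdd x i))) := by
      intro i
      rw [hg i, ← map_pow, ← ofAdd_nsmul]
      congr 1
      simp [← Pi.single_smul, nsmul_eq_mul, ZMod.natCast_val, ZMod.cast_id]
    have hx : MonoidAlgebra.of F (Multiplicative (Fin k → ZMod 2)) x
        = ∏ i, g i ^ (Multiplicative.toAdd x i).val := by
      rw [Finset.prod_congr rfl fun i _ => h1 i, ← map_prod, ← ofAdd_sum,
        Finset.univ_sum_single, ofAdd_toAdd]
    rw [hx]
    exact Subalgebra.prod_mem _ fun i _ => pow_mem (hmemg i) _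
  have hsurj : Function.Surjective L := by
    intro a
    have ha : a ∈ L.range := by
      induction a using MonoidAlgebra.induction_on with
      | of x => exact hmemof x
      | add p q hp hq => exact add_mem hp hq
      | smul r p hp => exact Subalgebra.smul_mem _ hp r
    obtain ⟨b, hb⟩ := ha
    exact ⟨b, hb⟩
  exact ⟨hinj, hsurj⟩
end

section
/- Let V be a type, k ≥ 2 a natural number, and let p, q : Fin k → V be injective functions. If the set of consecutive ordered pairs of p equals that of q, i.e. { (p i, p (i+1)) : i ∈ ℕ, i + 1 < k } = { (q i, q (i+1)) : i ∈ ℕ, i + 1 < k } as subsets of V × V, then p = q. (A directed path on at least two vertices is uniquely determined by its set of directed edges.) -/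
/-- A directed path on `k ≥ 2` vertices (an injective map `Fin k → V`) is uniquely
determined by its set of consecutive ordered pairs (directed edges). -/
theorem path_eq_of_edgeSet_eq
    {V : Type} (k : ℕ) (hk : 2 ≤ k) (p q : Fin k → V)
    (hp : Function.Injective p) (hq : Function.Injective q)
    (hedges :
      {x : V × V | ∃ (i : ℕ) (h : i + 1 < k),
          x = (p ⟨i, Nat.lt_of_succ_lt h⟩, p ⟨i + 1, h⟩)} =
      {x : V × V | ∃ (i : ℕ) (h : i + 1 < k),
          x = (q ⟨i, Nat.lt_of_succ_lt h⟩, q ⟨i + 1, h⟩)}) :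
    p = q := by
  have hQP : ∀ i (h : i + 1 < k), ∃ (j : ℕ) (hj : j + 1 < k),
      q ⟨i, Nat.lt_of_succ_lt h⟩ = p ⟨j, Nat.lt_of_succ_lt hj⟩ ∧
      q ⟨i + 1, h⟩ = p ⟨j + 1, hj⟩ := by
    intro i h
    have hmem : (q ⟨i, Nat.lt_of_succ_lt h⟩, q ⟨i + 1, h⟩) ∈
        {x : V × V | ∃ (i : ℕ) (h : i + 1 < k),
          x = (q ⟨i, Nat.lt_of_succ_lt h⟩, q ⟨i + 1, h⟩)} := ⟨i, h, rfl⟩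
    rw [← hedges] at hmem
    obtain ⟨j, hj, hx⟩ := hmem
    exact ⟨j, hj, congrArg Prod.fst hx, congrArg Prod.snd hx⟩
  have hPQ : ∀ j (hj : j + 1 < k), ∃ (i : ℕ) (hi : i + 1 < k),
      p ⟨j, Nat.lt_of_succ_lt hj⟩ = q ⟨i, Nat.lt_of_succ_lt hi⟩ ∧
      p ⟨j + 1, hj⟩ = q ⟨i + 1, hi⟩ := by
    intro j hj
    have hmem : (p ⟨j, Nat.lt_of_succ_lt hj⟩, p ⟨j + 1, hj⟩) ∈
        {x : V × V | ∃ (i : ℕ) (h : i + 1 < k),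
          x = (p ⟨i, Nat.lt_of_succ_lt h⟩, p ⟨i + 1, h⟩)} := ⟨j, hj, rfl⟩
    rw [hedges] at hmem
    obtain ⟨i, hi, hx⟩ := hmem
    exact ⟨i, hi, congrArg Prod.fst hx, congrArg Prod.snd hx⟩
  have h1k : (1 : ℕ) < k := by omega
  have h0 : ∀ (h : 0 < k), q ⟨0, h⟩ = p ⟨0, h⟩ := by
    intro h
    obtain ⟨j, hj, hq0, hq1⟩ := hQP 0 h1k
    match j with
    | 0 => exact hq0
    | j' + 1 =>
      exfalso
      have hj' : j' + 1 < k := Nat.lt_of_succ_lt hj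
      obtain ⟨i, hi, hp0, hp1⟩ := hPQ j' hj'
      have : q ⟨0, h⟩ = q ⟨i + 1, hi⟩ := by
        rw [hq0]
        convert hp1 using 2
      have := hq this
      simp [Fin.ext_iff] at this
  have main : ∀ i (h : i < k), q ⟨i, h⟩ = p ⟨i, h⟩ := by
    intro i
    induction i with
    | zero => exact h0
    | succ n ih =>
      intro h
      obtain ⟨j, hj, hn, hn1⟩ := hQP n h
      have hpj : p ⟨n, Nat.lt_of_succ_lt h⟩ = p ⟨j, Nat.lt_of_succ_lt hj⟩ := by
        rw [← ih (Nat.lt_of_succ_lt h)]; exact hn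
      have hnj : n = j := by simpa [Fin.ext_iff] using hp hpj
      subst hnj
      exact hn1
  funext x
  have := main x.1 x.2
  simpa using this.symm
end

section
/- Let V and W be finite types, ℓ ≥ 1, and let S, V_1, …, V_ℓ be subsets of V with S ⊆ V_i for all i, V_i ∩ V_j = S for all i ≠ j, and V_1 ∪ ⋯ ∪ V_ℓ = V. Let H_1, …, H_ℓ : SimpleGraph V be graphs such that every edge of H_i has both endpoints in V_i, let H = H_1 ⊔ ⋯ ⊔ H_ℓ be their union, and let G : SimpleGraph W. Fix a function π : S → W. Then the number of functions h : V → W that are graph homomorphisms from H to G (i.e. H.Adj u v implies G.Adj (h u) (h v)) and satisfy h|_S = π equals the product over i = 1, …, ℓ of the number of functions g : V_i → W satisfying g|_S = π such that H_i.Adj u v implies G.Adj (g u) (g v) for all u, v ∈ V_i. -/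
/-- Conditional independence of homomorphism counts across the pieces of a
separator decomposition: if the graphs `Hs i` live on sets `Vs i` that pairwise
intersect exactly in `S` and cover `V`, then the number of homomorphisms of
`⨆ i, Hs i` into `G` extending a fixed map `π : S → W` is the product over `i`
of the numbers of homomorphisms of `Hs i` into `G` extending `π`. -/
theorem hom_count_conditional_independence
    {V W : Type} [Fintype V] [Fintype W] (ℓ : ℕ) (hℓ : 1 ≤ ℓ)
    (S : Set V) (Vs : Fin ℓ → Set V)
    (hSV : ∀ i, S ⊆ Vs i)
    (hcap : ∀ i j, i ≠ j → Vs i ∩ Vs j = S)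
    (hcup : (⋃ i, Vs i) = Set.univ)
    (Hs : Fin ℓ → SimpleGraph V)
    (hedge : ∀ i u v, (Hs i).Adj u v → u ∈ Vs i ∧ v ∈ Vs i)
    (H : SimpleGraph V) (hH : H = ⨆ i, Hs i)
    (G : SimpleGraph W) (π : S → W) :
    Nat.card {h : V → W //
        (∀ u v, H.Adj u v → G.Adj (h u) (h v)) ∧ ∀ s : S, h s = π s}
      = ∏ i : Fin ℓ, Nat.card {g : (Vs i) → W //
          (∀ s : S, g ⟨s.1, hSV i s.2⟩ = π s) ∧
          ∀ (u v : V) (hu : u ∈ Vs i) (hv : v ∈ Vs i),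
            (Hs i).Adj u v → G.Adj (g ⟨u, hu⟩) (g ⟨v, hv⟩)} := by
  classical
  subst hH
  have hidx : ∀ v : V, ∃ i, v ∈ Vs i := by
    intro v
    have hv : v ∈ ⋃ i, Vs i := hcup ▸ Set.mem_univ v
    simpa using hv
  choose idx hidxmem using hidx
  rw [← Nat.card_pi]
  refine Nat.card_congr ?_
  set T : Fin ℓ → Type := fun i => {g : (Vs i) → W //
          (∀ s : S, g ⟨s.1, hSV i s.2⟩ = π s) ∧
          ∀ (u v : V) (hu : u ∈ Vs i) (hv : v ∈ Vs i),
            (Hs i).Adj u v → G.Adj (g ⟨u, hu⟩) (g ⟨v, hv⟩)} with hT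
  have key : ∀ (F : ∀ i, T i) (i j : Fin ℓ) (v : V) (hi : v ∈ Vs i) (hj : v ∈ Vs j),
      (F i).1 ⟨v, hi⟩ = (F j).1 ⟨v, hj⟩ := by
    intro F i j v hi hj
    rcases eq_or_ne i j with rfl | hij
    · rfl
    · have hvS : v ∈ S := by rw [← hcap i j hij]; exact ⟨hi, hj⟩
      have h1 := (F i).2.1 ⟨v, hvS⟩
      have h2 := (F j).2.1 ⟨v, hvS⟩
      exact h1.trans h2.symm
  refine
  { toFun := fun h i => ⟨fun x => h.1 x.1, ?_, ?_⟩
    invFun := fun F => ⟨fun v => (F (idx v)).1 ⟨v, hidxmem v⟩, ?_, ?_⟩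
    left_inv := ?_
    right_inv := ?_ }
  · intro s; exact h.2.2 s
  · intro u v hu hv hadj
    exact h.2.1 u v (le_iSup Hs i hadj)
  · intro u v hadj
    rw [SimpleGraph.iSup_adj] at hadj
    obtain ⟨i, hadj⟩ := hadj
    obtain ⟨hu, hv⟩ := hedge i u v hadj
    show G.Adj ((F (idx u)).1 ⟨u, hidxmem u⟩) ((F (idx v)).1 ⟨v, hidxmem v⟩)
    rw [key F (idx u) i u (hidxmem u) hu, key F (idx v) i v (hidxmem v) hv]
    exact (F i).2.2 u v hu hv hadj
  · intro s
    show (F (idx s.1)).1 ⟨s.1, hidxmem s.1⟩ = π s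
    rw [show (⟨s.1, hidxmem s.1⟩ : Vs (idx s.1)) = ⟨s.1, hSV (idx s.1) s.2⟩ from rfl]
    exact (F (idx s.1)).2.1 s
  · intro h
    ext v
    rfl
  · intro F
    funext i
    apply Subtype.ext
    funext x
    exact key F (idx x.1) i x.1 (hidxmem x.1) x.2
end
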